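/- arXiv:1306.0720 — 6 statements merged into one kernel-verified Lean document; each statement's English description precedes it below -/
import Mathlib

section
/- For a row contraction T on H, the n-th defect dimension Δ_T^n = dim(closure of range of (I - Ψ_T^n(I))) satisfies Δ_T^n ≤ (1 + d + d^2 + ... + d^{n-1}) Δ_T, where Δ_T is the first defect dimension. -/
open ContinuousLinearMap

/-- The completely positive map `Ψ_T(X) = ∑ i, T i X (T i)*` associated to a `d`-tuple. -/
noncomputable def psiMap {H : Type*} [NormedAddCommGroup H] [InnerProductSpace ℂ H]
    [CompleteSpace H] {d : ℕ} (T : Fin d → H →L[ℂ] H) (X : H →L[ℂ] H) : H →L[ℂ] H :=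
  ∑ i, T i ∘L X ∘L adjoint (T i)

/-- The `n`-th defect space: the closure of the range of `I - Ψ_T^n(I)`. -/
noncomputable def defectSpace {H : Type*} [NormedAddCommGroup H] [InnerProductSpace ℂ H]
    [CompleteSpace H] {d : ℕ} (T : Fin d → H →L[ℂ] H) (n : ℕ) : Submodule ℂ H :=
  (LinearMap.range ((1 - (psiMap T)^[n] 1 : H →L[ℂ] H) : H →ₗ[ℂ] H)).topologicalClosure

section Aux

variable {H : Type*} [NormedAddCommGroup H] [InnerProductSpace ℂ H] [CompleteSpace H]
  {d : ℕ} (T : Fin d → H →L[ℂ] H)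

lemma psiMap_sub (A B : H →L[ℂ] H) : psiMap T (A - B) = psiMap T A - psiMap T B := by
  simp [psiMap, ContinuousLinearMap.comp_sub, ContinuousLinearMap.sub_comp,
    Finset.sum_sub_distrib]

lemma psiMap_iterate_sub (k : ℕ) : ∀ A B : H →L[ℂ] H,
    (psiMap T)^[k] (A - B) = (psiMap T)^[k] A - (psiMap T)^[k] B := by
  induction k with
  | zero => simp
  | succ k ih =>
    intro A B
    rw [Function.iterate_succ_apply, Function.iterate_succ_apply,
      Function.iterate_succ_apply, psiMap_sub, ih]

lemma rank_finset_sup_le {ι : Type*} (s : Finset ι) (f : ι → Submodule ℂ H) :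
    Module.rank ℂ ↥(s.sup f) ≤ ∑ i ∈ s, Module.rank ℂ ↥(f i) := by
  classical
  refine Finset.induction_on s ?_ ?_
  · simp
  · intro a s ha ih
    rw [Finset.sup_insert, Finset.sum_insert ha]
    exact (Submodule.rank_add_le_rank_add_rank _ _).trans (add_le_add le_rfl ih)

lemma fd_finset_sup {ι : Type*} (s : Finset ι) (f : ι → Submodule ℂ H)
    (h : ∀ i ∈ s, FiniteDimensional ℂ ↥(f i)) : FiniteDimensional ℂ ↥(s.sup f) := by
  classical
  induction s using Finset.induction_on with
  | empty => rw [Finset.sup_empty]; exact finiteDimensional_bot ℂ H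
  | insert a s ha ih =>
    rw [Finset.sup_insert]
    haveI h1 := h a (Finset.mem_insert_self a s)
    haveI h2 := ih fun i hi => h i (Finset.mem_insert_of_mem hi)
    exact Submodule.finiteDimensional_sup _ _

end Aux

/-- For a row contraction `T` with finite first defect dimension `Δ_T`,
the `n`-th defect dimension satisfies `Δ_T^n ≤ (1 + d + ⋯ + d^{n-1}) Δ_T`. -/
theorem stmt4 {H : Type*} [NormedAddCommGroup H] [InnerProductSpace ℂ H] [CompleteSpace H]
    {d : ℕ} (T : Fin d → H →L[ℂ] H)
    (hT : (1 - psiMap T 1).IsPositive)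
    (hfin : FiniteDimensional ℂ (defectSpace T 1)) :
    ∀ n : ℕ, Module.rank ℂ (defectSpace T n) ≤
      (∑ i ∈ Finset.range n, (d : Cardinal) ^ i) * Module.rank ℂ (defectSpace T 1) := by
  classical
  set D : H →L[ℂ] H := 1 - psiMap T 1 with hD
  -- the iterated "image" submodules
  set S : ℕ → Submodule ℂ H :=
    fun k => (fun M => Finset.univ.sup fun i => M.map (T i : H →ₗ[ℂ] H))^[k] (defectSpace T 1) with hS
  have hS0 : S 0 = defectSpace T 1 := rfl
  have hSsucc : ∀ k, S (k + 1) = Finset.univ.sup fun i => (S k).map (T i : H →ₗ[ℂ] H) := by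
    intro k; simp [hS, Function.iterate_succ_apply']
  -- finite dimensionality of each S k
  have hfd : ∀ k, FiniteDimensional ℂ (S k) := by
    intro k
    induction k with
    | zero => exact hfin
    | succ k ih =>
      rw [hSsucc]
      refine fd_finset_sup _ _ fun i _ => ?_
      haveI := ih
      exact Module.Finite.map (S k) ((T i : H →L[ℂ] H) : H →ₗ[ℂ] H)
  -- rank bound for each S k
  have hrank : ∀ k, Module.rank ℂ (S k) ≤ (d : Cardinal) ^ k * Module.rank ℂ (defectSpace T 1) := by
    intro k
    induction k with
    | zero => rw [hS0, pow_zero, one_mul]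
    | succ k ih =>
      rw [hSsucc]
      calc Module.rank ℂ ↥(Finset.univ.sup fun i => (S k).map (T i : H →ₗ[ℂ] H))
          ≤ ∑ i : Fin d, Module.rank ℂ ↥((S k).map (T i : H →ₗ[ℂ] H)) := rank_finset_sup_le _ _
        _ ≤ ∑ _i : Fin d, ((d : Cardinal) ^ k * Module.rank ℂ (defectSpace T 1)) := by
            refine Finset.sum_le_sum fun i _ => ?_
            exact (rank_map_le _ _).trans ih
        _ = (d : Cardinal) ^ (k + 1) * Module.rank ℂ (defectSpace T 1) := by
            simp [Finset.sum_const, pow_succ, mul_comm, mul_assoc, mul_left_comm]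
  -- range of the iterated defect operators
  have hrange : ∀ k, LinearMap.range ((psiMap T)^[k] D : H →ₗ[ℂ] H) ≤ S k := by
    intro k
    induction k with
    | zero =>
      rw [hS0]
      intro x hx
      refine Submodule.le_topologicalClosure _ ?_
      simpa [hD, Function.iterate_one] using hx
    | succ k ih =>
      rintro x ⟨y, rfl⟩
      rw [Function.iterate_succ_apply']
      have hx : psiMap T ((psiMap T)^[k] D) y
          = ∑ i, T i ((psiMap T)^[k] D (adjoint (T i) y)) := by
        simp [psiMap, ContinuousLinearMap.sum_apply]
      rw [ContinuousLinearMap.coe_coe, hx, hSsucc]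
      refine Submodule.sum_mem _ fun i _ => ?_
      have hle : (S k).map (T i : H →ₗ[ℂ] H) ≤ Finset.univ.sup fun j => (S k).map (T j : H →ₗ[ℂ] H) :=
        Finset.le_sup (f := fun j => (S k).map (T j : H →ₗ[ℂ] H)) (Finset.mem_univ i)
      exact hle (Submodule.mem_map_of_mem (ih ⟨_, rfl⟩))
  intro n
  -- telescoping identity
  have hterm : ∀ k, ((psiMap T)^[k] D : H →L[ℂ] H)
      = (psiMap T)^[k] 1 - (psiMap T)^[k + 1] 1 := by
    intro k
    rw [hD, psiMap_iterate_sub, Function.iterate_succ_apply]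
  have htel : (1 - (psiMap T)^[n] 1 : H →L[ℂ] H)
      = ∑ k ∈ Finset.range n, (psiMap T)^[k] D := by
    calc (1 - (psiMap T)^[n] 1 : H →L[ℂ] H)
        = (psiMap T)^[0] 1 - (psiMap T)^[n] 1 := rfl
      _ = ∑ k ∈ Finset.range n, ((psiMap T)^[k] 1 - (psiMap T)^[k + 1] 1) :=
          (Finset.sum_range_sub' (fun k : ℕ => ((psiMap T)^[k] 1 : H →L[ℂ] H)) n).symm
      _ = ∑ k ∈ Finset.range n, (psiMap T)^[k] D := by
          exact Finset.sum_congr rfl fun k _ => (hterm k).symm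
  -- the containing finite-dimensional subspace
  set U : Submodule ℂ H := (Finset.range n).sup S with hU
  haveI hUfd : FiniteDimensional ℂ U := fd_finset_sup _ _ fun k _ => hfd k
  have hle : LinearMap.range ((1 - (psiMap T)^[n] 1 : H →L[ℂ] H) : H →ₗ[ℂ] H) ≤ U := by
    rintro x ⟨y, rfl⟩
    rw [htel]
    have hy : (∑ k ∈ Finset.range n, (psiMap T)^[k] D) y
        = ∑ k ∈ Finset.range n, (psiMap T)^[k] D y := by
      simp [ContinuousLinearMap.sum_apply]
    rw [ContinuousLinearMap.coe_coe, hy]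
    refine Submodule.sum_mem _ fun k hk => ?_
    have h2 : S k ≤ U := Finset.le_sup hk
    exact h2 (hrange k ⟨_, rfl⟩)
  have hclosed : IsClosed (U : Set H) := Submodule.closed_of_finiteDimensional U
  have hdn : defectSpace T n ≤ U :=
    Submodule.topologicalClosure_minimal _ hle hclosed
  calc Module.rank ℂ (defectSpace T n) ≤ Module.rank ℂ U := Submodule.rank_mono hdn
    _ ≤ ∑ k ∈ Finset.range n, Module.rank ℂ (S k) := rank_finset_sup_le _ _
    _ ≤ ∑ k ∈ Finset.range n, (d : Cardinal) ^ k * Module.rank ℂ (defectSpace T 1) :=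
        Finset.sum_le_sum fun k _ => hrank k
    _ = (∑ i ∈ Finset.range n, (d : Cardinal) ^ i) * Module.rank ℂ (defectSpace T 1) := by
        rw [Finset.sum_mul]
end

section
/- For a row contraction T, if n < m then D_m = D_n ∨ (closed span of T_{i_1}···T_{i_n}(D_{m-n}) over all words of length n), where D_k denotes the k-th defect space. -/
open ContinuousLinearMap

/-- The word operator `T_{w(0)} T_{w(1)} ⋯ T_{w(k-1)}` (the empty word gives the identity). -/
noncomputable def wordOp {H : Type*} [NormedAddCommGroup H] [InnerProductSpace ℂ H]
    [CompleteSpace H] {d : ℕ} (T : Fin d → H →L[ℂ] H) {k : ℕ} (w : Fin k → Fin d) :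
    H →L[ℂ] H :=
  (List.ofFn fun j => T (w j)).prod

section Aux

variable {H : Type*} [NormedAddCommGroup H] [InnerProductSpace ℂ H] [CompleteSpace H]
  {d : ℕ} (T : Fin d → H →L[ℂ] H)

lemma wordOp_zero (w : Fin 0 → Fin d) : wordOp T w = 1 := by
  simp [wordOp]

lemma wordOp_cons {n : ℕ} (i : Fin d) (w : Fin n → Fin d) :
    wordOp T (Fin.cons i w) = T i * wordOp T w := by
  simp only [wordOp, List.ofFn_succ, List.prod_cons, Fin.cons_zero, Fin.cons_succ]

/-- The word formula for the iterates of `Ψ_T`. -/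
lemma psiMap_iterate (n : ℕ) (X : H →L[ℂ] H) :
    (psiMap T)^[n] X = ∑ w : Fin n → Fin d, wordOp T w * X * adjoint (wordOp T w) := by
  induction n with
  | zero =>
      simp [wordOp_zero, ← star_eq_adjoint]
  | succ n ih =>
      have hsum : (∑ w : Fin (n + 1) → Fin d, wordOp T w * X * adjoint (wordOp T w))
          = ∑ p : Fin d × (Fin n → Fin d),
              wordOp T (Fin.cons p.1 p.2) * X * adjoint (wordOp T (Fin.cons p.1 p.2)) :=
        (Fintype.sum_equiv (Fin.consEquiv fun _ : Fin (n + 1) => Fin d)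
          (fun p => wordOp T (Fin.cons p.1 p.2) * X * adjoint (wordOp T (Fin.cons p.1 p.2)))
          (fun w => wordOp T w * X * adjoint (wordOp T w)) (fun p => rfl)).symm
      rw [Function.iterate_succ_apply', ih, hsum, Fintype.sum_prod_type]
      show psiMap T _ = _
      unfold psiMap
      refine Finset.sum_congr rfl fun i _ => ?_
      rw [← mul_def, ← mul_def]
      simp only [Finset.sum_mul, Finset.mul_sum]
      refine Finset.sum_congr rfl fun w _ => ?_
      rw [wordOp_cons, ← star_eq_adjoint, ← star_eq_adjoint, ← star_eq_adjoint, star_mul]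
      simp only [mul_assoc, mul_one]

/-- The fundamental defect identity. -/
lemma defect_add (n k : ℕ) :
    (1 - (psiMap T)^[n + k] 1 : H →L[ℂ] H) =
      (1 - (psiMap T)^[n] 1) +
        ∑ w : Fin n → Fin d,
          wordOp T w * (1 - (psiMap T)^[k] 1) * adjoint (wordOp T w) := by
  have h1 : ((psiMap T)^[n + k] 1 : H →L[ℂ] H) = (psiMap T)^[n] ((psiMap T)^[k] 1) :=
    Function.iterate_add_apply _ n k 1
  have h2 : (∑ w : Fin n → Fin d,
      wordOp T w * (1 - (psiMap T)^[k] 1 : H →L[ℂ] H) * adjoint (wordOp T w)) =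
      (∑ w : Fin n → Fin d, wordOp T w * 1 * adjoint (wordOp T w)) -
      ∑ w : Fin n → Fin d, wordOp T w * (psiMap T)^[k] 1 * adjoint (wordOp T w) := by
    rw [← Finset.sum_sub_distrib]
    refine Finset.sum_congr rfl fun w _ => ?_
    rw [mul_sub, sub_mul]
  rw [h1, h2, ← psiMap_iterate T n (1 : H →L[ℂ] H), ← psiMap_iterate T n ((psiMap T)^[k] 1)]
  abel

lemma defect_isPositive (hT : (1 - psiMap T 1).IsPositive) (k : ℕ) :
    (1 - (psiMap T)^[k] 1 : H →L[ℂ] H).IsPositive := by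
  induction k with
  | zero => simpa using isPositive_zero
  | succ k ih =>
      have h := defect_add T k 1
      rw [Function.iterate_one] at h
      rw [h]
      refine ih.add ?_
      refine Finset.sum_induction _ _ (fun a b ha hb => ha.add hb) isPositive_zero
        (fun w _ => ?_)
      simpa [mul_def, comp_assoc] using hT.conj_adjoint (wordOp T w)

set_option synthInstance.maxHeartbeats 1000000 in
lemma isPositive_apply_eq_zero {B : H →L[ℂ] H} (hB : B.IsPositive) {z : H}
    (hz : RCLike.re (inner ℂ (B z) z : ℂ) = 0) : B z = 0 := by
  have hB' : 0 ≤ B := (nonneg_iff_isPositive B).mpr hB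
  have hCC : CFC.sqrt B * CFC.sqrt B = B := CFC.sqrt_mul_sqrt_self B hB'
  set C := CFC.sqrt B with hC
  have hCpos : (0 : H →L[ℂ] H) ≤ C := CFC.sqrt_nonneg B
  have hCsa : IsSelfAdjoint C := ((nonneg_iff_isPositive C).mp hCpos).isSelfAdjoint
  have hadj : adjoint C = C := hCsa
  have hinner : (inner ℂ (B z) z : ℂ) = inner ℂ (C z) (C z) := by
    conv_lhs => rw [← hCC, mul_def, comp_apply]
    calc (inner ℂ (C (C z)) z : ℂ) = inner ℂ (adjoint C (C z)) z := by rw [hadj]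
      _ = inner ℂ (C z) (C z) := adjoint_inner_left C z (C z)
  rw [hinner, inner_self_eq_norm_sq] at hz
  have h0 : C z = 0 := norm_eq_zero.mp (by nlinarith [norm_nonneg (C z)])
  rw [← hCC, mul_def, comp_apply, h0, map_zero]

lemma orthogonal_range {A : H →L[ℂ] H} (hA : IsSelfAdjoint A) :
    (LinearMap.range (A : H →ₗ[ℂ] H))ᗮ = LinearMap.ker (A : H →ₗ[ℂ] H) := by
  have key : ∀ x v : H, (inner ℂ (A x) v : ℂ) = inner ℂ x (A v) := fun x v => by
    conv_lhs => rw [← hA.adjoint_eq]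
    exact adjoint_inner_left A v x
  ext v
  simp only [Submodule.mem_orthogonal, LinearMap.mem_range, LinearMap.mem_ker,
    forall_exists_index, ContinuousLinearMap.coe_coe]
  constructor
  · intro h
    have h2 : (inner ℂ (A v) (A v) : ℂ) = 0 := by
      rw [← key (A v) v]
      exact h (A (A v)) (A v) rfl
    rwa [inner_self_eq_zero] at h2
  · intro h u x hx
    subst hx
    rw [key, h, inner_zero_right]

lemma defectSpace_eq_orthogonal (hT : (1 - psiMap T 1).IsPositive) (k : ℕ) :
    defectSpace T k = (LinearMap.ker ((1 - (psiMap T)^[k] 1 : H →L[ℂ] H) : H →ₗ[ℂ] H))ᗮ := by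
  rw [defectSpace, ← Submodule.orthogonal_orthogonal_eq_closure,
    orthogonal_range (defect_isPositive T hT k).isSelfAdjoint]

/-- The key kernel lemma. -/
lemma ker_defect (hT : (1 - psiMap T 1).IsPositive) (n k : ℕ) {z : H}
    (hz : (1 - (psiMap T)^[n + k] 1 : H →L[ℂ] H) z = 0) :
    (1 - (psiMap T)^[n] 1 : H →L[ℂ] H) z = 0 ∧
      ∀ w : Fin n → Fin d,
        (1 - (psiMap T)^[k] 1 : H →L[ℂ] H) (adjoint (wordOp T w) z) = 0 := by
  set An := (1 - (psiMap T)^[n] 1 : H →L[ℂ] H)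
  set Ak := (1 - (psiMap T)^[k] 1 : H →L[ℂ] H)
  have hpos_n : An.IsPositive := defect_isPositive T hT n
  have hpos_k : Ak.IsPositive := defect_isPositive T hT k
  have hpos_w : ∀ w : Fin n → Fin d, (wordOp T w * Ak * adjoint (wordOp T w)).IsPositive :=
    fun w => by simpa [mul_def, comp_assoc] using hpos_k.conj_adjoint (wordOp T w)
  have hsum : RCLike.re (inner ℂ (An z) z : ℂ) +
      ∑ w : Fin n → Fin d, RCLike.re (inner ℂ ((wordOp T w * Ak * adjoint (wordOp T w)) z) z : ℂ)
      = 0 := by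
    have h := congrArg (fun B : H →L[ℂ] H => RCLike.re (inner ℂ (B z) z : ℂ)) (defect_add T n k)
    simp only [hz, inner_zero_left, map_zero, ContinuousLinearMap.add_apply, sum_apply, inner_add_left,
      sum_inner, map_add, map_sum] at h
    exact h.symm
  have hterm_nonneg : ∀ w ∈ (Finset.univ : Finset (Fin n → Fin d)),
      0 ≤ RCLike.re (inner ℂ ((wordOp T w * Ak * adjoint (wordOp T w)) z) z : ℂ) :=
    fun w _ => (hpos_w w).re_inner_nonneg_left z
  have hsum_nonneg : 0 ≤ ∑ w : Fin n → Fin d,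
      RCLike.re (inner ℂ ((wordOp T w * Ak * adjoint (wordOp T w)) z) z : ℂ) :=
    Finset.sum_nonneg hterm_nonneg
  have hn_nonneg := hpos_n.re_inner_nonneg_left z
  have hn0 : RCLike.re (inner ℂ (An z) z : ℂ) = 0 := by linarith
  have hs0 : (∑ w : Fin n → Fin d,
      RCLike.re (inner ℂ ((wordOp T w * Ak * adjoint (wordOp T w)) z) z : ℂ)) = 0 := by linarith
  have hw0 : ∀ w : Fin n → Fin d,
      RCLike.re (inner ℂ ((wordOp T w * Ak * adjoint (wordOp T w)) z) z : ℂ) = 0 := fun w =>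
    (Finset.sum_eq_zero_iff_of_nonneg hterm_nonneg).mp hs0 w (Finset.mem_univ w)
  refine ⟨isPositive_apply_eq_zero hpos_n hn0, fun w => ?_⟩
  refine isPositive_apply_eq_zero hpos_k ?_
  have := hw0 w
  rwa [mul_def, mul_def, comp_apply, comp_apply, ← adjoint_inner_right (wordOp T w)] at this

end Aux

/-- For `n < m`, `D_m = D_n ∨ T^n (D_{m-n}^{d^n})`: the `m`-th defect space is the closed
join of `D_n` and the span of all `T_{i_1} ⋯ T_{i_n} x` with `x ∈ D_{m-n}`. -/
theorem stmt8 {H : Type*} [NormedAddCommGroup H] [InnerProductSpace ℂ H] [CompleteSpace H]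
    {d : ℕ} (T : Fin d → H →L[ℂ] H)
    (hT : (1 - psiMap T 1).IsPositive) :
    ∀ n m : ℕ, n < m →
      defectSpace T m =
        (defectSpace T n ⊔
          Submodule.span ℂ {y : H | ∃ (w : Fin n → Fin d) (x : H),
            x ∈ defectSpace T (m - n) ∧ y = wordOp T w x}).topologicalClosure := by
  intro n m hnm
  have hm : m = n + (m - n) := (Nat.add_sub_cancel' hnm.le).symm
  set k := m - n with hk
  set S := defectSpace T n ⊔
    Submodule.span ℂ {y : H | ∃ (w : Fin n → Fin d) (x : H),
      x ∈ defectSpace T k ∧ y = wordOp T w x} with hS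
  refine le_antisymm ?_ ?_
  · rw [defectSpace]
    refine Submodule.topologicalClosure_mono ?_
    rintro y ⟨x, rfl⟩
    have hx : (1 - (psiMap T)^[m] 1 : H →L[ℂ] H) x =
        (1 - (psiMap T)^[n] 1 : H →L[ℂ] H) x +
          ∑ w : Fin n → Fin d,
            (wordOp T w * (1 - (psiMap T)^[k] 1) * adjoint (wordOp T w)) x := by
      conv_lhs => rw [hm, defect_add T n k]
      simp [add_apply, sum_apply]
    show (1 - (psiMap T)^[m] 1 : H →L[ℂ] H) x ∈ S
    rw [hx]
    refine Submodule.add_mem _ ?_ (Submodule.sum_mem _ fun w _ => ?_)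
    · exact Submodule.mem_sup_left
        (Submodule.le_topologicalClosure _ (LinearMap.mem_range.mpr ⟨x, rfl⟩))
    · refine Submodule.mem_sup_right (Submodule.subset_span ?_)
      refine ⟨w, (1 - (psiMap T)^[k] 1 : H →L[ℂ] H) (adjoint (wordOp T w) x),
        Submodule.le_topologicalClosure _ (LinearMap.mem_range.mpr ⟨_, rfl⟩), ?_⟩
      simp [mul_def]
  · have hclosed : IsClosed (defectSpace T m : Set H) := by
      rw [defectSpace]; exact Submodule.isClosed_topologicalClosure _
    have hle : S ≤ defectSpace T m := ?_
    · exact S.topologicalClosure_minimal hle hclosed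
    refine sup_le ?_ ?_
    · rw [defectSpace_eq_orthogonal T hT n, defectSpace_eq_orthogonal T hT m]
      refine Submodule.orthogonal_le fun z hz => ?_
      rw [LinearMap.mem_ker] at hz ⊢
      refine (ker_defect T hT n k ?_).1
      rwa [← hm]
    · rw [Submodule.span_le]
      rintro y ⟨w, x, hx, rfl⟩
      rw [defectSpace_eq_orthogonal T hT k] at hx
      rw [SetLike.mem_coe, defectSpace_eq_orthogonal T hT m]
      rw [Submodule.mem_orthogonal] at hx ⊢
      intro u hu
      rw [LinearMap.mem_ker] at hu
      have hker : (1 - (psiMap T)^[k] 1 : H →L[ℂ] H) (adjoint (wordOp T w) u) = 0 :=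
        (ker_defect T hT n k (by rwa [← hm])).2 w
      have := hx (adjoint (wordOp T w) u) (LinearMap.mem_ker.mpr hker)
      rwa [adjoint_inner_left] at this
end

section
/- For a row contraction T, if the n-th and (n+1)-th defect dimensions coincide and are finite (equivalently D_n = D_{n+1}), then D_n = D_m for all m > n. -/
open ContinuousLinearMap

section Aux

variable {H : Type*} [NormedAddCommGroup H] [InnerProductSpace ℂ H] [CompleteSpace H] {d : ℕ}

local notation "⟪" x ", " y "⟫" => @inner ℂ _ _ x y

lemma psi_apply (T : Fin d → H →L[ℂ] H) (X : H →L[ℂ] H) (x : H) :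
    psiMap T X x = ∑ i, T i (X (adjoint (T i) x)) := by
  simp [psiMap]

lemma psi_pos {T : Fin d → H →L[ℂ] H} {X : H →L[ℂ] H} (hX : X.IsPositive) :
    (psiMap T X).IsPositive := by
  unfold psiMap
  exact Finset.sum_induction _ IsPositive (fun a b ha hb => ha.add hb) isPositive_zero
    (fun i _ => hX.conj_adjoint (T i))

lemma psi_sub (T : Fin d → H →L[ℂ] H) (X Y : H →L[ℂ] H) :
    psiMap T (X - Y) = psiMap T X - psiMap T Y := by
  unfold psiMap
  rw [← Finset.sum_sub_distrib]
  congr 1; ext i : 1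
  simp [comp_sub, sub_comp]

lemma psi_iter_sub (T : Fin d → H →L[ℂ] H) (m : ℕ) (X Y : H →L[ℂ] H) :
    (psiMap T)^[m] (X - Y) = (psiMap T)^[m] X - (psiMap T)^[m] Y := by
  induction m generalizing X Y with
  | zero => simp
  | succ k ih => simp [Function.iterate_succ_apply, psi_sub, ih]

lemma psi_iter_pos {T : Fin d → H →L[ℂ] H} {X : H →L[ℂ] H} (hX : X.IsPositive) (m : ℕ) :
    ((psiMap T)^[m] X).IsPositive := by
  induction m with
  | zero => exact hX
  | succ k ih => rw [Function.iterate_succ_apply']; exact psi_pos ih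

/-- `1 - Ψ^{m+1}(1) = (1 - Ψ^m(1)) + Ψ^m(1 - Ψ(1))`. -/
lemma defect_op_succ (T : Fin d → H →L[ℂ] H) (m : ℕ) :
    (1 - (psiMap T)^[m+1] 1 : H →L[ℂ] H)
      = (1 - (psiMap T)^[m] 1) + (psiMap T)^[m] (1 - psiMap T 1) := by
  rw [psi_iter_sub, Function.iterate_succ_apply]
  abel

/-- `1 - Ψ^{m+1}(1) = (1 - Ψ(1)) + Ψ(1 - Ψ^m(1))`. -/
lemma defect_op_succ' (T : Fin d → H →L[ℂ] H) (m : ℕ) :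
    (1 - (psiMap T)^[m+1] 1 : H →L[ℂ] H)
      = (1 - psiMap T 1) + psiMap T (1 - (psiMap T)^[m] 1) := by
  rw [psi_sub, Function.iterate_succ_apply']
  abel

lemma defect_op_pos {T : Fin d → H →L[ℂ] H} (hT : (1 - psiMap T 1).IsPositive) (m : ℕ) :
    (1 - (psiMap T)^[m] 1 : H →L[ℂ] H).IsPositive := by
  induction m with
  | zero => simpa using isPositive_zero
  | succ k ih => rw [defect_op_succ]; exact ih.add (psi_iter_pos hT k)

/-- If `P` is positive and `re ⟪P x, x⟫ = 0` then `P x = 0`. -/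
lemma pos_inner_zero {P : H →L[ℂ] H} (hP : P.IsPositive) {x : H}
    (hx : RCLike.re ⟪P x, x⟫ = 0) : P x = 0 := by
  set y := P x with hy
  set a : ℝ := ‖y‖ ^ 2 with ha
  set b : ℝ := RCLike.re ⟪P y, y⟫ with hb
  have hb0 : 0 ≤ b := hP.re_inner_nonneg_left y
  have hsymm := hP.isSelfAdjoint.isSymmetric
  have hs1 : ⟪P y, x⟫ = ((a : ℝ) : ℂ) := by
    have h1 : ⟪P y, x⟫ = ⟪y, P x⟫ := hsymm y x
    rw [h1, ← hy, inner_self_eq_norm_sq_to_K, ha]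
    norm_cast
  have hs2 : ⟪P x, y⟫ = ((a : ℝ) : ℂ) := by
    rw [← hy, inner_self_eq_norm_sq_to_K, ha]
    norm_cast
  have key : ∀ t : ℝ, 0 ≤ b * t ^ 2 + 2 * a * t := by
    intro t
    have h := hP.re_inner_nonneg_left (x + (t : ℂ) • y)
    have hc : ⟪P (x + (t : ℂ) • y), x + (t : ℂ) • y⟫
        = ⟪P x, x⟫ + (((2 * t * a : ℝ)) : ℂ) + (((t ^ 2 : ℝ)) : ℂ) * ⟪P y, y⟫ := by
      rw [map_add, map_smul]
      simp only [inner_add_left, inner_add_right, inner_smul_left, inner_smul_right,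
        Complex.conj_ofReal, smul_apply, hs1, hs2]
      push_cast
      ring
    rw [hc] at h
    simp only [RCLike.re_to_complex, Complex.add_re, Complex.ofReal_re, Complex.mul_re,
      Complex.ofReal_im, zero_mul, sub_zero] at h
    have hx' : (inner (𝕜 := ℂ) (P x) x).re = 0 := hx
    rw [hx', zero_add] at h
    have hb' : (inner (𝕜 := ℂ) (P y) y).re = b := rfl
    rw [hb'] at h
    linarith
  have hale : a ≤ 0 := by
    by_contra hpos
    push_neg at hpos
    have hb1 : (0:ℝ) < b + 1 := by linarith
    set u : ℝ := a / (b + 1) with hu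
    have hupos : 0 < u := div_pos hpos hb1
    have hau : a = u * (b + 1) := by rw [hu]; field_simp
    have hk := key (-u)
    nlinarith [mul_pos hupos hupos, hk, hau, hb0]
  have ha0 : 0 ≤ a := by rw [ha]; positivity
  have : ‖y‖ = 0 := by
    have : a = 0 := le_antisymm hale ha0
    rw [ha] at this
    nlinarith [norm_nonneg y]
  rw [hy] at this
  simpa using this

lemma inner_psi (T : Fin d → H →L[ℂ] H) (X : H →L[ℂ] H) (x : H) :
    ⟪psiMap T X x, x⟫ = ∑ i, ⟪X (adjoint (T i) x), adjoint (T i) x⟫ := by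
  rw [psi_apply, sum_inner]
  congr 1; ext i : 1
  rw [← adjoint_inner_right]

/-- The defect space equals the orthogonal complement of the kernel of `1 - Ψ^m(1)`. -/
lemma defect_eq_orth {T : Fin d → H →L[ℂ] H} (hT : (1 - psiMap T 1).IsPositive) (m : ℕ) :
    defectSpace T m = (LinearMap.ker ((1 - (psiMap T)^[m] 1 : H →L[ℂ] H) : H →ₗ[ℂ] H))ᗮ := by
  set B : H →L[ℂ] H := 1 - (psiMap T)^[m] 1 with hB
  have horth : (LinearMap.range (B : H →ₗ[ℂ] H))ᗮ = LinearMap.ker (B : H →ₗ[ℂ] H) := by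
    ext x
    simp only [Submodule.mem_orthogonal, LinearMap.mem_range, LinearMap.mem_ker,
      forall_exists_index]
    constructor
    · intro h
      have h' : ∀ y : H, ⟪y, adjoint B x⟫ = 0 := by
        intro y
        rw [adjoint_inner_right]
        exact h (B y) y rfl
      have : adjoint B x = 0 := by
        have := h' (adjoint B x)
        rwa [inner_self_eq_zero] at this
      rwa [(defect_op_pos hT m).isSelfAdjoint.adjoint_eq] at this
    · intro h u y hy
      subst hy
      simp only [ContinuousLinearMap.coe_coe] at h ⊢
      rw [← adjoint_inner_right, (defect_op_pos hT m).isSelfAdjoint.adjoint_eq, h,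
        inner_zero_right]
  rw [defectSpace, ← Submodule.orthogonal_orthogonal_eq_closure, horth]

end Aux

/-- If the `n`-th and `(n+1)`-th defect spaces coincide, then `D_n = D_m` for all `m > n`
(so the defect sequence stabilizes). -/
theorem stmt9 {H : Type*} [NormedAddCommGroup H] [InnerProductSpace ℂ H] [CompleteSpace H]
    {d : ℕ} (T : Fin d → H →L[ℂ] H)
    (hT : (1 - psiMap T 1).IsPositive)
    (n : ℕ) (hstab : defectSpace T n = defectSpace T (n + 1)) :
    ∀ m : ℕ, n < m → defectSpace T n = defectSpace T m := by
  set A : ℕ → (H →L[ℂ] H) := fun m => 1 - (psiMap T)^[m] 1 with hA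
  set C : ℕ → (H →L[ℂ] H) := fun m => (psiMap T)^[m] (1 - psiMap T 1) with hC
  have hApos : ∀ m, (A m).IsPositive := defect_op_pos hT
  have hCpos : ∀ m, (C m).IsPositive := psi_iter_pos hT
  -- kernels coincide at n and n+1
  have hker : LinearMap.ker (A n : H →ₗ[ℂ] H) = LinearMap.ker (A (n+1) : H →ₗ[ℂ] H) := by
    have h1 : (LinearMap.ker (A n : H →ₗ[ℂ] H))ᗮ = (LinearMap.ker (A (n+1) : H →ₗ[ℂ] H))ᗮ := by
      rw [← defect_eq_orth hT n, ← defect_eq_orth hT (n+1)]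
      exact hstab
    have h2 := congrArg (fun K : Submodule ℂ H => Kᗮ) h1
    simpa [Submodule.orthogonal_orthogonal_eq_closure,
      (ContinuousLinearMap.isClosed_ker (A n)).submodule_topologicalClosure_eq,
      (ContinuousLinearMap.isClosed_ker (A (n+1))).submodule_topologicalClosure_eq] using h2
  -- adjoint of each T i maps ker (A (m+1)) into ker (A m)
  have hstep : ∀ m (x : H), A (m+1) x = 0 → ∀ i, A m (adjoint (T i) x) = 0 := by
    intro m x hx i
    have hx' : ((1 - psiMap T 1) + psiMap T (1 - (psiMap T)^[m] 1)) x = 0 := by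
      rw [← defect_op_succ' T m]; exact hx
    have hsum : RCLike.re (inner (𝕜 := ℂ)
        (((1 - psiMap T 1) + psiMap T (1 - (psiMap T)^[m] 1)) x) x) = 0 := by
      rw [hx', inner_zero_left]; simp
    rw [ContinuousLinearMap.add_apply, inner_add_left, map_add, inner_psi] at hsum
    have hterm : ∀ j : Fin d,
        0 ≤ RCLike.re (inner (𝕜 := ℂ) ((1 - (psiMap T)^[m] 1) (adjoint (T j) x)) (adjoint (T j) x)) :=
      fun j => (hApos m).re_inner_nonneg_left _
    have h1 : 0 ≤ RCLike.re (inner (𝕜 := ℂ) ((1 - psiMap T 1) x) x) := hT.re_inner_nonneg_left x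
    have hsum' : RCLike.re (∑ j, inner (𝕜 := ℂ) ((1 - (psiMap T)^[m] 1) (adjoint (T j) x)) (adjoint (T j) x))
        = ∑ j, RCLike.re (inner (𝕜 := ℂ) ((1 - (psiMap T)^[m] 1) (adjoint (T j) x)) (adjoint (T j) x)) :=
      map_sum _ _ _
    rw [hsum'] at hsum
    have hzero : ∑ j, RCLike.re (inner (𝕜 := ℂ) ((1 - (psiMap T)^[m] 1) (adjoint (T j) x)) (adjoint (T j) x))
        = 0 := by
      have hs : 0 ≤ ∑ j, RCLike.re (inner (𝕜 := ℂ) ((1 - (psiMap T)^[m] 1) (adjoint (T j) x)) (adjoint (T j) x)) :=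
        Finset.sum_nonneg fun j _ => hterm j
      linarith
    have := (Finset.sum_eq_zero_iff_of_nonneg (fun j _ => hterm j)).mp hzero i (Finset.mem_univ i)
    exact pos_inner_zero (hApos m) this
  -- membership in ker (A n) is preserved by adjoints of T i
  have hKinv : ∀ x : H, A n x = 0 → ∀ i, A n (adjoint (T i) x) = 0 := by
    intro x hx i
    have hx1 : A (n+1) x = 0 := by
      have : x ∈ LinearMap.ker (A (n+1) : H →ₗ[ℂ] H) := hker ▸ LinearMap.mem_ker.mpr hx
      exact this
    exact hstep n x hx1 i
  -- C (n+j) vanishes on ker (A n)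
  have hCzero : ∀ j (x : H), A n x = 0 → C (n + j) x = 0 := by
    intro j
    induction j with
    | zero =>
      intro x hx
      have hx1 : A (n+1) x = 0 := by
        have : x ∈ LinearMap.ker (A (n+1) : H →ₗ[ℂ] H) := hker ▸ LinearMap.mem_ker.mpr hx
        exact this
      have : A (n+1) x = A n x + C n x := by
        show (1 - (psiMap T)^[n+1] 1) x = (1 - (psiMap T)^[n] 1) x + ((psiMap T)^[n] (1 - psiMap T 1)) x
        rw [defect_op_succ T n]; rfl
      rw [hx1, hx, zero_add] at this
      simpa using this.symm
    | succ k ih =>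
      intro x hx
      have hCk : C (n + (k+1)) = psiMap T (C (n + k)) := by
        show (psiMap T)^[n + k + 1] (1 - psiMap T 1) = psiMap T ((psiMap T)^[n + k] (1 - psiMap T 1))
        rw [Function.iterate_succ_apply']
      have hinner : inner (𝕜 := ℂ) (C (n + (k+1)) x) x = 0 := by
        rw [hCk, inner_psi]
        refine Finset.sum_eq_zero fun i _ => ?_
        rw [ih (adjoint (T i) x) (hKinv x hx i), inner_zero_left]
      have : RCLike.re (inner (𝕜 := ℂ) (C (n + (k+1)) x) x) = 0 := by
        rw [hinner]; simp
      exact pos_inner_zero (hCpos (n + (k+1))) this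
  -- ker (A n) ⊆ ker (A (n+j))
  have hsub1 : ∀ j (x : H), A n x = 0 → A (n + j) x = 0 := by
    intro j
    induction j with
    | zero => intro x hx; simpa using hx
    | succ k ih =>
      intro x hx
      have : A (n + k + 1) x = A (n + k) x + C (n + k) x := by
        show (1 - (psiMap T)^[n+k+1] 1) x
          = (1 - (psiMap T)^[n+k] 1) x + ((psiMap T)^[n+k] (1 - psiMap T 1)) x
        rw [defect_op_succ T (n + k)]; rfl
      rw [ih x hx, hCzero k x hx, zero_add] at this
      exact this
  -- ker (A (m+1)) ⊆ ker (A m)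
  have hmono : ∀ m (x : H), A (m+1) x = 0 → A m x = 0 := by
    intro m x hx
    have hsum : RCLike.re (inner (𝕜 := ℂ) (A (m+1) x) x) = 0 := by
      rw [hx, inner_zero_left]; simp
    have hid : A (m+1) x = A m x + C m x := by
      show (1 - (psiMap T)^[m+1] 1) x = (1 - (psiMap T)^[m] 1) x + ((psiMap T)^[m] (1 - psiMap T 1)) x
      rw [defect_op_succ T m]; rfl
    rw [hid, inner_add_left, map_add] at hsum
    have h1 : 0 ≤ RCLike.re (inner (𝕜 := ℂ) (A m x) x) := (hApos m).re_inner_nonneg_left x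
    have h2 : 0 ≤ RCLike.re (inner (𝕜 := ℂ) (C m x) x) := (hCpos m).re_inner_nonneg_left x
    exact pos_inner_zero (hApos m) (by linarith)
  -- ker (A (n+j)) ⊆ ker (A n)
  have hsub2 : ∀ j (x : H), A (n + j) x = 0 → A n x = 0 := by
    intro j
    induction j with
    | zero => intro x hx; simpa using hx
    | succ k ih =>
      intro x hx
      exact ih x (hmono (n + k) x hx)
  intro m hm
  obtain ⟨j, rfl⟩ : ∃ j, m = n + j := ⟨m - n, by omega⟩
  have hkerj : LinearMap.ker (A n : H →ₗ[ℂ] H) = LinearMap.ker (A (n + j) : H →ₗ[ℂ] H) := by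
    ext x
    simp only [LinearMap.mem_ker]
    exact ⟨hsub1 j x, hsub2 j x⟩
  rw [defect_eq_orth hT n, defect_eq_orth hT (n + j)]
  exact congrArg _ hkerj
end

section
/- Let T be a row contraction on an infinite-dimensional Hilbert space H with first defect dimension Δ_T = 1, say D_1 = ℂξ. Then T is maximal (i.e., Δ_T^n = 1 + d + ... + d^{n-1} for all n) if and only if there is no nonzero polynomial P in d noncommuting variables with P(T_1,...,T_d)ξ = 0. -/
open ContinuousLinearMap

namespace Stmt13Aux

variable {H : Type*} [NormedAddCommGroup H] [InnerProductSpace ℂ H] [CompleteSpace H]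

local notation "⟪" x ", " y "⟫" => @inner ℂ _ _ x y

open RCLike ComplexConjugate

lemma slope_zero {a b : ℝ} (h : ∀ t : ℝ, 0 ≤ a + t * b) : b = 0 := by
  by_contra hb
  have h2 := h (-(a + 1) / b)
  rw [div_mul_cancel₀ _ hb] at h2
  linarith

lemma IsPositive.apply_eq_zero {A : H →L[ℂ] H} (hA : A.IsPositive) {x : H}
    (hx : re ⟪A x, x⟫ = 0) : A x = 0 := by
  have key : ∀ y : H, re ⟪A x, y⟫ = 0 := by
    intro y
    have hsym : ⟪A y, x⟫ = conj ⟪A x, y⟫ := by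
      rw [← inner_conj_symm]
      congr 1
      rw [← ContinuousLinearMap.adjoint_inner_left, hA.isSelfAdjoint.adjoint_eq]
    have h0 : (2:ℝ) * re ⟪A x, y⟫ = 0 := by
      apply slope_zero (a := re ⟪A y, y⟫)
      intro t
      have expand : ⟪A (y + (t:ℂ)•x), y + (t:ℂ)•x⟫ =
          ⟪A y, y⟫ + (t:ℂ) * conj ⟪A x, y⟫ + (t:ℂ) * ⟪A x, y⟫
            + (t:ℂ) * ((t:ℂ) * ⟪A x, x⟫) := by
        rw [map_add, map_smul, inner_add_left, inner_add_right, inner_add_right,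
          inner_smul_left, inner_smul_right, inner_smul_left, inner_smul_right, hsym]
        rw [Complex.conj_ofReal]
        ring
      have h1 := hA.re_inner_nonneg_left (y + (t:ℂ) • x)
      rw [expand] at h1
      rw [RCLike.re_to_complex] at hx
      simp only [map_add, RCLike.re_to_complex, Complex.add_re, Complex.mul_re,
        Complex.ofReal_re, Complex.ofReal_im, Complex.conj_re, Complex.conj_im,
        hx, zero_mul, mul_zero, sub_zero, add_zero, zero_sub, neg_zero] at h1 ⊢
      calc (0:ℝ) ≤ (⟪A y, y⟫).re + t * (⟪A x, y⟫).re + t * (⟪A x, y⟫).re := by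
            convert h1 using 1 <;> ring
        _ = (⟪A y, y⟫).re + t * (2 * (⟪A x, y⟫).re) := by ring
    linarith
  have key2 : ∀ y : H, ⟪A x, y⟫ = 0 := by
    intro y
    have h1 := key y
    have h2 := key ((Complex.I : ℂ) • y)
    rw [inner_smul_right] at h2
    apply Complex.ext
    · exact h1
    · simpa [Complex.mul_re, Complex.I_re, Complex.I_im] using h2
  have := key2 (A x)
  rwa [inner_self_eq_zero] at this

lemma isPositive_sum {ι : Type*} {s : Finset ι} {f : ι → H →L[ℂ] H}
    (h : ∀ i ∈ s, (f i).IsPositive) : (∑ i ∈ s, f i).IsPositive := by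
  induction s using Finset.cons_induction with
  | empty => simpa using isPositive_zero
  | cons i s his ih =>
      rw [Finset.sum_cons]
      exact (h i (Finset.mem_cons_self _ _)).add (ih fun j hj => h j (Finset.mem_cons_of_mem hj))

lemma closure_range_eq {A : H →L[ℂ] H} (hA : IsSelfAdjoint A) :
    (LinearMap.range (A : H →ₗ[ℂ] H)).topologicalClosure = (LinearMap.ker (A : H →ₗ[ℂ] H))ᗮ := by
  rw [← Submodule.orthogonal_orthogonal_eq_closure]
  congr 1
  ext x
  simp only [Submodule.mem_orthogonal, LinearMap.mem_range, LinearMap.mem_ker,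
    forall_exists_index]
  constructor
  · intro h
    have h2 : ⟪A x, A x⟫ = (0:ℂ) := by
      have h3 := h (A (A x)) (A x) rfl
      calc ⟪A x, A x⟫ = ⟪adjoint A (A x), x⟫ := by
            rw [ContinuousLinearMap.adjoint_inner_left]
        _ = ⟪A (A x), x⟫ := by rw [hA.adjoint_eq]
        _ = 0 := h3
    rwa [inner_self_eq_zero] at h2
  · intro h u y hy
    subst hy
    calc ⟪A y, x⟫ = ⟪adjoint A y, x⟫ := by rw [hA.adjoint_eq]
      _ = ⟪y, A x⟫ := ContinuousLinearMap.adjoint_inner_left _ _ _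
      _ = 0 := by rw [show A x = 0 from h, inner_zero_right]


section Words

variable {d : ℕ} (T : Fin d → H →L[ℂ] H)

/-- The operator `T_w` for a word `w`. -/
noncomputable def wOp (w : List (Fin d)) : H →L[ℂ] H := (w.map T).prod

@[simp] lemma wOp_nil : wOp T ([] : List (Fin d)) = 1 := by simp [wOp]

lemma wOp_cons (i : Fin d) (w : List (Fin d)) : wOp T (i :: w) = T i * wOp T w := by
  simp [wOp]

/-- The defect operator `E_n = 1 - Ψ^n(1)`. -/
noncomputable def Eop (n : ℕ) : H →L[ℂ] H := 1 - (psiMap T)^[n] 1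

lemma defectSpace_eq_closure (n : ℕ) :
    defectSpace T n = (LinearMap.range (Eop T n : H →ₗ[ℂ] H)).topologicalClosure := rfl

@[simp] lemma Eop_zero : Eop T 0 = 0 := by simp [Eop]

@[simp] lemma Eop_one : Eop T 1 = 1 - psiMap T 1 := by simp [Eop]

lemma Eop_succ (n : ℕ) :
    Eop T (n + 1) = (1 - psiMap T 1) + ∑ i, T i ∘L Eop T n ∘L adjoint (T i) := by
  have h : (psiMap T)^[n + 1] 1 = psiMap T ((psiMap T)^[n] 1) :=
    Function.iterate_succ_apply' _ _ _
  simp only [Eop, h, psiMap, ← ContinuousLinearMap.mul_def]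
  simp only [mul_sub, sub_mul, one_mul, mul_one, Finset.sum_sub_distrib]
  abel

lemma Eop_isPositive (hT : (1 - psiMap T 1).IsPositive) : ∀ n, (Eop T n).IsPositive
  | 0 => by rw [Eop_zero]; exact isPositive_zero
  | (n + 1) => by
      rw [Eop_succ]
      exact hT.add (isPositive_sum fun i _ => (Eop_isPositive hT n).conj_adjoint (T i))


lemma rankOne (hT : (1 - psiMap T 1).IsPositive) {ξ : H} (hξ : ξ ≠ 0)
    (hD : defectSpace T 1 = Submodule.span ℂ {ξ}) :
    ∃ c : ℝ, 0 < c ∧ ∀ x, (1 - psiMap T 1) x = ((c : ℂ) * ⟪ξ, x⟫) • ξ := by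
  set D := 1 - psiMap T 1 with hDdef
  have hmem : ∀ x, D x ∈ Submodule.span ℂ {ξ} := by
    intro x
    rw [← hD, defectSpace_eq_closure, Eop_one, ← hDdef]
    exact Submodule.le_topologicalClosure _ (LinearMap.mem_range.mpr ⟨x, rfl⟩)
  have hsa : ∀ u v : H, ⟪D u, v⟫ = ⟪u, D v⟫ := by
    intro u v
    calc ⟪D u, v⟫ = ⟪adjoint D u, v⟫ := by rw [hT.isSelfAdjoint.adjoint_eq]
      _ = ⟪u, D v⟫ := ContinuousLinearMap.adjoint_inner_left _ _ _
  obtain ⟨μ, hμ⟩ := Submodule.mem_span_singleton.mp (hmem ξ)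
  have hnz : (‖ξ‖ : ℂ) ^ 2 ≠ 0 := by
    have : ‖ξ‖ ≠ 0 := norm_ne_zero_iff.mpr hξ
    exact pow_ne_zero 2 (by exact_mod_cast this)
  set c' : ℂ := conj μ / (‖ξ‖ : ℂ) ^ 2 with hc'def
  clear_value c'
  have key : ∀ x, D x = (c' * ⟪ξ, x⟫) • ξ := by
    intro x
    obtain ⟨a, ha⟩ := Submodule.mem_span_singleton.mp (hmem x)
    have h1 : ⟪ξ, D x⟫ = a * (‖ξ‖ : ℂ) ^ 2 := by
      rw [← ha, inner_smul_right, inner_self_eq_norm_sq_to_K]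
      norm_cast
    have h2 : ⟪ξ, D x⟫ = conj μ * ⟪ξ, x⟫ := by
      rw [← hsa, ← hμ, inner_smul_left]
    have h3 : a * (‖ξ‖ : ℂ) ^ 2 = conj μ * ⟪ξ, x⟫ := by rw [← h1, h2]
    rw [← ha]
    congr 1
    rw [hc'def, div_mul_eq_mul_div, eq_div_iff hnz, h3]
  have hμreal : conj μ = μ := by
    have e1 : ⟪ξ, D ξ⟫ = μ * (‖ξ‖ : ℂ) ^ 2 := by
      rw [← hμ, inner_smul_right, inner_self_eq_norm_sq_to_K]
      norm_cast
    have e2 : conj ⟪ξ, D ξ⟫ = ⟪ξ, D ξ⟫ := by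
      rw [inner_conj_symm, hsa]
    rw [e1, map_mul, map_pow, Complex.conj_ofReal] at e2
    exact mul_right_cancel₀ hnz e2
  have hc'real : (c'.re : ℂ) = c' := by
    rw [← Complex.conj_eq_iff_re]
    rw [hc'def, map_div₀, map_pow, Complex.conj_ofReal, Complex.conj_conj, hμreal]
  have hc'ne : c' ≠ 0 := by
    intro h0
    have hDzero : ∀ x, D x = 0 := fun x => by rw [key x, h0, zero_mul, zero_smul]
    have hle : defectSpace T 1 ≤ ⊥ := by
      rw [defectSpace_eq_closure, Eop_one, ← hDdef]
      apply Submodule.topologicalClosure_minimal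
      · rintro u hu
        obtain ⟨y, rfl⟩ := LinearMap.mem_range.mp hu
        simp [hDzero y]
      · exact Submodule.closed_of_finiteDimensional ⊥
    exact hξ ((Submodule.mem_bot ℂ).mp (hle (hD ▸ Submodule.mem_span_singleton_self ξ)))
  have hrepos : 0 ≤ c'.re * (‖ξ‖ ^ 2 * ‖ξ‖ ^ 2) := by
    have hpos := hT.re_inner_nonneg_left ξ
    have hc'real2 : (RCLike.ofReal c'.re : ℂ) = c' := hc'real
    have harg : (c' * ⟪ξ, ξ⟫ : ℂ) = RCLike.ofReal (c'.re * ‖ξ‖ ^ 2) := by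
      rw [inner_self_eq_norm_sq_to_K, ← hc'real2]
      norm_cast
    have e3 : RCLike.re ⟪D ξ, ξ⟫ = c'.re * (‖ξ‖ ^ 2 * ‖ξ‖ ^ 2) := by
      rw [key ξ, inner_smul_left, harg, RCLike.conj_ofReal, inner_self_eq_norm_sq_to_K]
      rw [← RCLike.ofReal_pow, ← RCLike.ofReal_mul, RCLike.ofReal_re]
      ring
    rw [e3] at hpos
    exact hpos
  have hnormpos : 0 < ‖ξ‖ := norm_pos_iff.mpr hξ
  have hcre : 0 < c'.re := by
    rcases lt_trichotomy c'.re 0 with h | h | h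
    · exfalso
      nlinarith [pow_pos hnormpos 2, mul_pos (pow_pos hnormpos 2) (pow_pos hnormpos 2)]
    · exfalso; exact hc'ne (by rw [← hc'real, h, Complex.ofReal_zero])
    · exact h
  exact ⟨c'.re, hcre, fun x => by rw [key x, hc'real]⟩


lemma Ti_mem_span (i : Fin d) (n : ℕ) {ξ : H} {y : H}
    (hy : y ∈ Submodule.span ℂ ((fun w => wOp T w ξ) '' {w : List (Fin d) | w.length < n})) :
    T i y ∈ Submodule.span ℂ ((fun w => wOp T w ξ) '' {w : List (Fin d) | w.length < n + 1}) := by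
  induction hy using Submodule.span_induction with
  | mem x hx =>
      obtain ⟨w, hw, rfl⟩ := hx
      apply Submodule.subset_span
      refine ⟨i :: w, by simpa using Nat.succ_lt_succ hw, ?_⟩
      show (wOp T (i :: w)) ξ = T i (wOp T w ξ)
      rw [wOp_cons, ContinuousLinearMap.mul_apply]
  | zero => simp
  | add x y _ _ hx hy => rw [map_add]; exact Submodule.add_mem _ hx hy
  | smul a x _ hx => rw [map_smul]; exact Submodule.smul_mem _ a hx

lemma Eop_apply_mem_span {ξ : H} {c : ℝ}
    (hc : ∀ x, (1 - psiMap T 1) x = ((c : ℂ) * ⟪ξ, x⟫) • ξ) (n : ℕ) (x : H) :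
    Eop T n x ∈ Submodule.span ℂ ((fun w => wOp T w ξ) '' {w : List (Fin d) | w.length < n}) := by
  induction n generalizing x with
  | zero => simp
  | succ n ih =>
      rw [Eop_succ]
      rw [ContinuousLinearMap.add_apply, ContinuousLinearMap.sum_apply]
      apply Submodule.add_mem
      · rw [hc x]
        apply Submodule.smul_mem
        apply Submodule.subset_span
        exact ⟨[], by simp, by simp⟩
      · apply Submodule.sum_mem
        intro i _
        rw [ContinuousLinearMap.comp_apply, ContinuousLinearMap.comp_apply]
        exact Ti_mem_span T i n (ih (adjoint (T i) x))

lemma ker_orth (hT : (1 - psiMap T 1).IsPositive) {ξ : H} {c : ℝ} (hcpos : 0 < c)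
    (hc : ∀ x, (1 - psiMap T 1) x = ((c : ℂ) * ⟪ξ, x⟫) • ξ) (n : ℕ) :
    ∀ x : H, Eop T n x = 0 → ∀ w : List (Fin d), w.length < n → ⟪wOp T w ξ, x⟫ = 0 := by
  induction n with
  | zero => intro x hx w hw; omega
  | succ n ih =>
      intro x hx w hw
      have hEsum : Eop T (n + 1) x
          = (1 - psiMap T 1) x + ∑ i, (T i ∘L Eop T n ∘L adjoint (T i)) x := by
        rw [Eop_succ, ContinuousLinearMap.add_apply, ContinuousLinearMap.sum_apply]
      have h2 : RCLike.re ⟪(1 - psiMap T 1) x, x⟫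
          + ∑ i, RCLike.re ⟪(T i ∘L Eop T n ∘L adjoint (T i)) x, x⟫ = 0 := by
        have h0 : ⟪(1 - psiMap T 1) x + ∑ i, (T i ∘L Eop T n ∘L adjoint (T i)) x, x⟫ = (0 : ℂ) := by
          rw [← hEsum, hx, inner_zero_left]
        rw [inner_add_left, sum_inner] at h0
        have := congrArg RCLike.re h0
        simpa only [map_add, map_sum, map_zero] using this
      have ha : 0 ≤ RCLike.re ⟪(1 - psiMap T 1) x, x⟫ := hT.re_inner_nonneg_left x
      have hb : ∀ i, 0 ≤ RCLike.re ⟪(T i ∘L Eop T n ∘L adjoint (T i)) x, x⟫ :=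
        fun i => ((Eop_isPositive T hT n).conj_adjoint (T i)).re_inner_nonneg_left x
      have hsumnn : 0 ≤ ∑ i, RCLike.re ⟪(T i ∘L Eop T n ∘L adjoint (T i)) x, x⟫ :=
        Finset.sum_nonneg fun i _ => hb i
      have ha0 : RCLike.re ⟪(1 - psiMap T 1) x, x⟫ = 0 := by linarith
      have hsum0 : ∑ i, RCLike.re ⟪(T i ∘L Eop T n ∘L adjoint (T i)) x, x⟫ = 0 := by linarith
      have hi0 : ∀ i, RCLike.re ⟪(T i ∘L Eop T n ∘L adjoint (T i)) x, x⟫ = 0 := by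
        intro i
        exact (Finset.sum_eq_zero_iff_of_nonneg (fun i _ => hb i)).mp hsum0 i (Finset.mem_univ i)
      have h4 : ∀ i, Eop T n ((adjoint (T i)) x) = 0 := by
        intro i
        apply IsPositive.apply_eq_zero (Eop_isPositive T hT n)
        rw [ContinuousLinearMap.adjoint_inner_right]
        have := hi0 i
        rwa [ContinuousLinearMap.comp_apply, ContinuousLinearMap.comp_apply] at this
      rcases w with _ | ⟨i, t⟩
      · simp only [wOp_nil, ContinuousLinearMap.one_apply]
        have h5 : RCLike.re ⟪((c : ℂ) * ⟪ξ, x⟫) • ξ, x⟫ = 0 := by rw [← hc x]; exact ha0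
        rw [inner_smul_left, map_mul (starRingEnd ℂ), Complex.conj_ofReal] at h5
        have h6 : (starRingEnd ℂ) ⟪ξ, x⟫ * ⟪ξ, x⟫ = ((Complex.normSq ⟪ξ, x⟫ : ℝ) : ℂ) := by
          rw [mul_comm, Complex.mul_conj]
        rw [mul_assoc, h6] at h5
        have h7 : c * Complex.normSq ⟪ξ, x⟫ = 0 := by
          simpa [RCLike.re_to_complex] using h5
        have h8 : Complex.normSq ⟪ξ, x⟫ = 0 := by
          rcases mul_eq_zero.mp h7 with h | h
          · exact absurd h (ne_of_gt hcpos)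
          · exact h
        exact Complex.normSq_eq_zero.mp h8
      · have hlt : t.length < n := by simpa [Nat.succ_lt_succ_iff] using hw
        have := ih (adjoint (T i) x) (h4 i) t hlt
        rw [wOp_cons, ContinuousLinearMap.mul_apply,
          ← ContinuousLinearMap.adjoint_inner_right]
        exact this

lemma defectSpace_eq_span (hT : (1 - psiMap T 1).IsPositive) {ξ : H} (hξ : ξ ≠ 0)
    (hD : defectSpace T 1 = Submodule.span ℂ {ξ}) (n : ℕ) :
    defectSpace T n
      = Submodule.span ℂ ((fun w => wOp T w ξ) '' {w : List (Fin d) | w.length < n}) := by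
  obtain ⟨c, hcpos, hc⟩ := rankOne T hT hξ hD
  have hfin : ((fun w => wOp T w ξ) '' {w : List (Fin d) | w.length < n}).Finite :=
    (List.finite_length_lt (Fin d) n).image _
  have hfd : FiniteDimensional ℂ
      (Submodule.span ℂ ((fun w => wOp T w ξ) '' {w : List (Fin d) | w.length < n})) :=
    FiniteDimensional.span_of_finite ℂ hfin
  apply le_antisymm
  · rw [defectSpace_eq_closure]
    apply Submodule.topologicalClosure_minimal
    · rintro u hu
      obtain ⟨y, rfl⟩ := LinearMap.mem_range.mp hu
      exact Eop_apply_mem_span T hc n y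
    · exact Submodule.closed_of_finiteDimensional _
  · rw [defectSpace_eq_closure, closure_range_eq (Eop_isPositive T hT n).isSelfAdjoint,
      Submodule.span_le]
    rintro u ⟨w, hw, rfl⟩
    rw [SetLike.mem_coe, Submodule.mem_orthogonal]
    intro y hy
    rw [← inner_conj_symm, ker_orth T hT hcpos hc n y (LinearMap.mem_ker.mp hy) w hw, map_zero]

end Words

section Counting

def listLtEquiv (α : Type*) (n : ℕ) :
    {w : List α // w.length < n} ≃ Σ i : Fin n, List.Vector α i where
  toFun w := ⟨⟨w.1.length, w.2⟩, ⟨w.1, rfl⟩⟩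
  invFun p := ⟨p.2.1, by rw [p.2.2]; exact p.1.2⟩
  left_inv w := rfl
  right_inv p := by
    obtain ⟨⟨i, hi⟩, l, hl⟩ := p
    dsimp at hl
    subst hl
    rfl

noncomputable instance listLtFintype (α : Type*) [Fintype α] (n : ℕ) :
    Fintype {w : List α // w.length < n} := Fintype.ofEquiv _ (listLtEquiv α n).symm

lemma card_listLt (α : Type*) [Fintype α] (n : ℕ) :
    Fintype.card {w : List α // w.length < n}
      = ∑ i ∈ Finset.range n, Fintype.card α ^ i := by
  rw [Fintype.card_congr (listLtEquiv α n), Fintype.card_sigma,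
    ← Fin.sum_univ_eq_sum_range (fun i => Fintype.card α ^ i) n]
  exact Finset.sum_congr rfl fun i _ => card_vector _

end Counting

section Main

variable {d : ℕ} (T : Fin d → H →L[ℂ] H)

lemma card_cast (n : ℕ) :
    ((Fintype.card {w : List (Fin d) // w.length < n} : ℕ) : Cardinal)
      = ∑ i ∈ Finset.range n, (d : Cardinal) ^ i := by
  rw [card_listLt, Fintype.card_fin]
  push_cast
  rfl

lemma rank_iff_linIndep (hT : (1 - psiMap T 1).IsPositive) {ξ : H} (hξ : ξ ≠ 0)
    (hD : defectSpace T 1 = Submodule.span ℂ {ξ}) :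
    (∀ n : ℕ, Module.rank ℂ (defectSpace T n) = ∑ i ∈ Finset.range n, (d : Cardinal) ^ i)
      ↔ LinearIndependent ℂ (fun w : List (Fin d) => wOp T w ξ) := by
  have hds : ∀ n : ℕ, defectSpace T n
      = Submodule.span ℂ
          (Set.range (fun w : {w : List (Fin d) // w.length < n} => wOp T w.1 ξ)) := by
    intro n
    rw [defectSpace_eq_span T hT hξ hD n]
    congr 1
    rw [Set.image_eq_range]
    rfl
  constructor
  · intro h
    rw [linearIndependent_iff_finset_linearIndependent]
    intro s
    set n := (s.sup List.length) + 1 with hn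
    have hidx : ∀ w : s, (w : List (Fin d)).length < n :=
      fun w => Nat.lt_succ_of_le (Finset.le_sup w.2)
    have hsub : LinearIndependent ℂ
        (fun w : {w : List (Fin d) // w.length < n} => wOp T w.1 ξ) := by
      rw [linearIndependent_iff_card_eq_finrank_span]
      have hr := h n
      rw [hds n] at hr
      have hr2 : Module.rank ℂ
          (Submodule.span ℂ
            (Set.range (fun w : {w : List (Fin d) // w.length < n} => wOp T w.1 ξ)))
          = ((Fintype.card {w : List (Fin d) // w.length < n} : ℕ) : Cardinal) := by
        rw [hr, card_cast]
      have hfr := Module.finrank_eq_of_rank_eq hr2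
      rw [Set.finrank]
      exact hfr.symm
    have hcomp := hsub.comp (fun w : s => (⟨w.1, hidx w⟩ : {w : List (Fin d) // w.length < n}))
      (by
        intro a b hab
        apply Subtype.ext
        simpa using congrArg Subtype.val hab)
    exact hcomp
  · intro h n
    have hsub : LinearIndependent ℂ
        (fun w : {w : List (Fin d) // w.length < n} => wOp T w.1 ξ) :=
      h.comp _ Subtype.val_injective
    rw [hds n]
    have hfd : FiniteDimensional ℂ
        (Submodule.span ℂ
          (Set.range (fun w : {w : List (Fin d) // w.length < n} => wOp T w.1 ξ))) :=
      FiniteDimensional.span_of_finite ℂ (Set.finite_range _)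
    rw [← Module.finrank_eq_rank ℂ]
    rw [show Module.finrank ℂ
        (Submodule.span ℂ
          (Set.range (fun w : {w : List (Fin d) // w.length < n} => wOp T w.1 ξ)))
        = Set.finrank ℂ
            (Set.range (fun w : {w : List (Fin d) // w.length < n} => wOp T w.1 ξ)) from rfl]
    rw [← linearIndependent_iff_card_eq_finrank_span.mp hsub]
    exact card_cast (d := d) n

lemma lift_word (w : List (Fin d)) :
    (FreeAlgebra.lift ℂ T) ((w.map (FreeAlgebra.ι ℂ)).prod) = wOp T w := by
  rw [map_list_prod]
  simp [wOp, List.map_map, Function.comp_def]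

lemma equiv_word (w : List (Fin d)) :
    FreeAlgebra.equivMonoidAlgebraFreeMonoid ((w.map (FreeAlgebra.ι ℂ)).prod)
      = MonoidAlgebra.single (FreeMonoid.ofList w) 1 := by
  induction w with
  | nil =>
      simp only [List.map_nil, List.prod_nil, map_one]
      rfl
  | cons i t ih =>
      rw [List.map_cons, List.prod_cons, map_mul, ih]
      have h1 : FreeAlgebra.equivMonoidAlgebraFreeMonoid (FreeAlgebra.ι ℂ i)
          = MonoidAlgebra.single (FreeMonoid.of i) (1 : ℂ) := by
        simp [FreeAlgebra.equivMonoidAlgebraFreeMonoid]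
      rw [h1, MonoidAlgebra.single_mul_single, one_mul]
      rfl

lemma basis_apply (w : FreeMonoid (Fin d)) :
    (FreeAlgebra.basisFreeMonoid ℂ (Fin d)) w
      = ((FreeMonoid.toList w).map (FreeAlgebra.ι ℂ)).prod := by
  rw [FreeAlgebra.basisFreeMonoid, Module.Basis.map_apply]
  have h0 : (Finsupp.basisSingleOne (R := ℂ) (ι := FreeMonoid (Fin d))) w
      = Finsupp.single w 1 := by
    simp
  rw [h0]
  show (FreeAlgebra.equivMonoidAlgebraFreeMonoid
      (R := ℂ) (X := Fin d)).symm (MonoidAlgebra.single w (1:ℂ)) = _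
  rw [AlgEquiv.symm_apply_eq]
  have h1 := equiv_word (d := d) (FreeMonoid.toList w)
  rw [h1]
  rfl

lemma poly_iff_linIndep (ξ : H) :
    (∀ P : FreeAlgebra ℂ (Fin d), (FreeAlgebra.lift ℂ T P) ξ = 0 → P = 0)
      ↔ LinearIndependent ℂ (fun w : List (Fin d) => wOp T w ξ) := by
  set b := FreeAlgebra.basisFreeMonoid ℂ (Fin d) with hb
  set L : FreeAlgebra ℂ (Fin d) →ₗ[ℂ] H :=
    { toFun := fun P => (FreeAlgebra.lift ℂ T P) ξ
      map_add' := fun P Q => by simp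
      map_smul' := fun a P => by simp } with hL
  have hLb : ∀ w : FreeMonoid (Fin d), L (b w) = wOp T (FreeMonoid.toList w) ξ := by
    intro w
    show (FreeAlgebra.lift ℂ T (b w)) ξ = _
    rw [hb, basis_apply, lift_word]
  have hfun : (⇑L ∘ ⇑b) = fun w : FreeMonoid (Fin d) => wOp T (FreeMonoid.toList w) ξ :=
    funext fun w => hLb w
  constructor
  · intro hP
    have hker : LinearMap.ker L = ⊥ := LinearMap.ker_eq_bot'.mpr fun P h0 => hP P h0
    have hli : LinearIndependent ℂ (⇑L ∘ ⇑b) := by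
      apply b.linearIndependent.map
      rw [hker]
      exact disjoint_bot_right
    have h2 : LinearIndependent ℂ
        (fun w : FreeMonoid (Fin d) => wOp T (FreeMonoid.toList w) ξ) := by
      rwa [hfun] at hli
    exact (linearIndependent_equiv (FreeMonoid.toList (α := Fin d))).mp h2
  · intro hli P hP0
    have h2 : LinearIndependent ℂ
        (fun w : FreeMonoid (Fin d) => wOp T (FreeMonoid.toList w) ξ) :=
      (linearIndependent_equiv (FreeMonoid.toList (α := Fin d))).mpr hli
    have h4 : Finsupp.linearCombination ℂ
        (fun w : FreeMonoid (Fin d) => wOp T (FreeMonoid.toList w) ξ) (b.repr P) = L P := by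
      rw [← hfun, ← Finsupp.apply_linearCombination, b.linearCombination_repr]
    have h3 := linearIndependent_iff.mp h2 (b.repr P) (by rw [h4]; exact hP0)
    exact b.repr.map_eq_zero_iff.mp h3

end Main

end Stmt13Aux

/-- Characterization of maximality: a row contraction on an infinite-dimensional Hilbert
space with one-dimensional first defect space `D_1 = ℂξ` is maximal
(`Δ_T^n = 1 + d + ⋯ + d^{n-1}` for all `n`) iff no nonzero noncommutative polynomial
`P` in `d` variables satisfies `P(T_1, …, T_d) ξ = 0`. -/
theorem stmt13 {H : Type*} [NormedAddCommGroup H] [InnerProductSpace ℂ H] [CompleteSpace H]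
    {d : ℕ} (T : Fin d → H →L[ℂ] H)
    (hT : (1 - psiMap T 1).IsPositive)
    (hinf : ¬ FiniteDimensional ℂ H)
    (ξ : H) (hξ : ξ ≠ 0) (hD : defectSpace T 1 = Submodule.span ℂ {ξ}) :
    (∀ n : ℕ, Module.rank ℂ (defectSpace T n) = ∑ i ∈ Finset.range n, (d : Cardinal) ^ i)
      ↔
    (∀ P : FreeAlgebra ℂ (Fin d), (FreeAlgebra.lift ℂ T P) ξ = 0 → P = 0) := by
  rw [Stmt13Aux.rank_iff_linIndep T hT hξ hD, Stmt13Aux.poly_iff_linIndep T ξ]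
end

section
/- Let T be a single contraction on a finite-dimensional Hilbert space H with Δ_T = 1 and D_1 = ℂξ. Then Δ_T^n = min(n, m) for all n (for some m ≤ dim H) if and only if the set {ξ, Tξ, ..., T^{m-1}ξ} is linearly independent and there exists a polynomial P of degree m with P(T)ξ = 0. -/
open ContinuousLinearMap Polynomial

local notation "⟪" x ", " y "⟫" => @inner ℂ _ _ x y
section Aux

variable {H : Type*} [NormedAddCommGroup H] [InnerProductSpace ℂ H] [FiniteDimensional ℂ H]

lemma closure_eq (K : Submodule ℂ H) : K.topologicalClosure = K :=
  K.closed_of_finiteDimensional.submodule_topologicalClosure_eq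

/-- rank-one structure of the defect operator -/
lemma rank_one_struct (T : H →L[ℂ] H) (ξ : H) (hξ : ξ ≠ 0)
    (hD : LinearMap.range ((1 - T * adjoint T : H →L[ℂ] H) : H →ₗ[ℂ] H) = Submodule.span ℂ {ξ}) :
    ∃ c : ℂ, c ≠ 0 ∧ ∀ x, (1 - T * adjoint T) x = (c * ⟪ξ, x⟫) • ξ := by
  set A : H →L[ℂ] H := 1 - T * adjoint T with hA
  have hsa : IsSelfAdjoint A := by
    rw [IsSelfAdjoint, hA, star_sub, star_mul, star_one, star_eq_adjoint, star_eq_adjoint,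
      adjoint_adjoint]
  have hmem : ∀ x, A x ∈ Submodule.span ℂ ({ξ} : Set H) := by
    intro x; rw [← hD]; exact ⟨x, rfl⟩
  obtain ⟨b, hb⟩ := Submodule.mem_span_singleton.mp (hmem ξ)
  have hξξ : ⟪ξ, ξ⟫ ≠ 0 := fun h => hξ (inner_self_eq_zero.mp h)
  refine ⟨starRingEnd ℂ b / ⟪ξ, ξ⟫, ?_, ?_⟩
  · intro hc
    have hb0 : b = 0 := by
      have := div_eq_zero_iff.mp hc
      rcases this with h | h
      · simpa using congrArg (starRingEnd ℂ) h
      · exact absurd h hξξ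
    have hA0 : A = 0 := by
      ext x
      obtain ⟨a, ha⟩ := Submodule.mem_span_singleton.mp (hmem x)
      have h1 : ⟪A ξ, x⟫ = ⟪ξ, A x⟫ := by
        nth_rewrite 1 [← hsa.adjoint_eq]
        exact adjoint_inner_left A x ξ
      rw [← hb, ← ha] at h1
      rw [inner_smul_left, inner_smul_right, hb0, map_zero, zero_mul] at h1
      have ha0 : a = 0 := by
        rcases mul_eq_zero.mp h1.symm with h | h
        · exact h
        · exact absurd h hξξ
      rw [← ha, ha0]; exact zero_smul ℂ ξ
    obtain ⟨y, hy⟩ : ξ ∈ LinearMap.range ((A : H →L[ℂ] H) : H →ₗ[ℂ] H) :=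
      hD.symm ▸ Submodule.mem_span_singleton_self ξ
    rw [hA0] at hy
    exact hξ (by simpa using hy.symm)
  · intro x
    obtain ⟨a, ha⟩ := Submodule.mem_span_singleton.mp (hmem x)
    have h1 : ⟪A ξ, x⟫ = ⟪ξ, A x⟫ := by
      nth_rewrite 1 [← hsa.adjoint_eq]
      exact adjoint_inner_left A x ξ
    rw [← hb, ← ha, inner_smul_left, inner_smul_right] at h1
    have ha' : a = starRingEnd ℂ b / ⟪ξ, ξ⟫ * ⟪ξ, x⟫ := by
      rw [div_mul_eq_mul_div, eq_div_iff hξξ]; exact h1.symm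
    rw [← ha, ha']

end Aux
section Aux2

variable {H : Type*} [NormedAddCommGroup H] [InnerProductSpace ℂ H] [FiniteDimensional ℂ H]

lemma defect_apply (T : H →L[ℂ] H) (ξ : H) (c : ℂ)
    (hc : ∀ x, (1 - T * adjoint T) x = (c * ⟪ξ, x⟫) • ξ) (n : ℕ) (x : H) :
    (1 - T ^ n * adjoint (T ^ n)) x
      = ∑ k ∈ Finset.range n, (c * ⟪(T ^ k) ξ, x⟫) • (T ^ k) ξ := by
  induction n with
  | zero => simp [← star_eq_adjoint]
  | succ n ih =>
    have hop : (1 - T ^ (n+1) * adjoint (T ^ (n+1)) : H →L[ℂ] H)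
        = (1 - T ^ n * adjoint (T ^ n)) + T ^ n * (1 - T * adjoint T) * adjoint (T ^ n) := by
      simp only [← star_eq_adjoint, star_pow]
      rw [pow_succ T n, pow_succ' (star T) n]
      noncomm_ring
    rw [hop, ContinuousLinearMap.add_apply, ih, Finset.sum_range_succ]
    congr 1
    rw [ContinuousLinearMap.mul_apply, ContinuousLinearMap.mul_apply, hc, map_smul]
    congr 2
    exact adjoint_inner_right (T ^ n) ξ x

lemma range_eq_span (T : H →L[ℂ] H) (ξ : H) (c : ℂ) (hc0 : c ≠ 0)
    (hc : ∀ x, (1 - T * adjoint T) x = (c * ⟪ξ, x⟫) • ξ) (n : ℕ) :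
    LinearMap.range ((1 - T ^ n * adjoint (T ^ n) : H →L[ℂ] H) : H →ₗ[ℂ] H)
      = Submodule.span ℂ (Set.range fun k : Fin n => (T ^ (k : ℕ)) ξ) := by
  set A : H →L[ℂ] H := 1 - T ^ n * adjoint (T ^ n) with hA
  set S : Set H := Set.range fun k : Fin n => (T ^ (k : ℕ)) ξ with hS
  apply le_antisymm
  · rintro y ⟨x, rfl⟩
    have : A x = ∑ k ∈ Finset.range n, (c * ⟪(T ^ k) ξ, x⟫) • (T ^ k) ξ :=
      defect_apply T ξ c hc n x
    rw [ContinuousLinearMap.coe_coe, this]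
    exact Submodule.sum_mem _ fun k hk => Submodule.smul_mem _ _
      (Submodule.subset_span ⟨⟨k, Finset.mem_range.mp hk⟩, rfl⟩)
  · have hker : (LinearMap.range ((A : H →L[ℂ] H) : H →ₗ[ℂ] H))ᗮ ≤ (Submodule.span ℂ S)ᗮ := by
      intro x hx
      have h0 : ⟪A x, x⟫ = 0 :=
        (Submodule.mem_orthogonal _ x).mp hx (A x) ⟨x, rfl⟩
      rw [defect_apply T ξ c hc n x, sum_inner] at h0
      have h1 : ∀ k ∈ Finset.range n,
          ⟪(c * ⟪(T ^ k) ξ, x⟫) • (T ^ k) ξ, x⟫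
            = (starRingEnd ℂ) c * (Complex.normSq ⟪(T ^ k) ξ, x⟫ : ℂ) := by
        intro k _
        rw [inner_smul_left, map_mul]
        rw [mul_assoc]
        congr 1
        rw [← Complex.normSq_eq_conj_mul_self]
      rw [Finset.sum_congr rfl h1, ← Finset.mul_sum] at h0
      have h2 : (∑ k ∈ Finset.range n, (Complex.normSq ⟪(T ^ k) ξ, x⟫ : ℂ)) = 0 := by
        rcases mul_eq_zero.mp h0 with h | h
        · exact absurd h (by simpa using hc0)
        · exact h
      rw [← Complex.ofReal_sum, Complex.ofReal_eq_zero] at h2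
      have h3 : ∀ k ∈ Finset.range n, Complex.normSq ⟪(T ^ k) ξ, x⟫ = 0 :=
        (Finset.sum_eq_zero_iff_of_nonneg fun k _ => Complex.normSq_nonneg _).mp h2
      rw [Submodule.mem_orthogonal]
      intro u hu
      induction hu using Submodule.span_induction with
      | mem u hu =>
        obtain ⟨k, rfl⟩ := hu
        exact Complex.normSq_eq_zero.mp (h3 k (Finset.mem_range.mpr k.2))
      | zero => exact inner_zero_left x
      | add u v _ _ hu hv => rw [inner_add_left, hu, hv, add_zero]
      | smul a u _ hu => rw [inner_smul_left, hu, mul_zero]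
    have h4 := Submodule.orthogonal_le hker
    rwa [Submodule.orthogonal_orthogonal, Submodule.orthogonal_orthogonal] at h4

end Aux2
section Aux3

variable {H : Type*} [NormedAddCommGroup H] [InnerProductSpace ℂ H] [FiniteDimensional ℂ H]

lemma span_iterates_iff (T : H →L[ℂ] H) (ξ : H) (hξ : ξ ≠ 0) (m : ℕ) :
    (∀ n : ℕ, Module.finrank ℂ
        (Submodule.span ℂ (Set.range fun k : Fin n => (T ^ (k : ℕ)) ξ)) = min n m) ↔
    (LinearIndependent ℂ (fun i : Fin m => (T ^ (i : ℕ)) ξ) ∧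
      ∃ P : Polynomial ℂ, P.degree = (m : ℕ) ∧ (Polynomial.aeval T P) ξ = 0) := by
  constructor
  · intro h
    have hind : LinearIndependent ℂ (fun i : Fin m => (T ^ (i : ℕ)) ξ) := by
      apply linearIndependent_iff_card_eq_finrank_span.mpr
      rw [Set.finrank]
      simp [h m]
    refine ⟨hind, ?_⟩
    -- T^m ξ lies in the span of the previous iterates
    set W : Submodule ℂ H := Submodule.span ℂ (Set.range fun i : Fin m => (T ^ (i : ℕ)) ξ)
    set V : Submodule ℂ H := Submodule.span ℂ (Set.range fun i : Fin (m+1) => (T ^ (i : ℕ)) ξ)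
    have hWV : W ≤ V := by
      apply Submodule.span_le.mpr
      rintro _ ⟨i, rfl⟩
      exact Submodule.subset_span ⟨i.castSucc, rfl⟩
    have hfrW : Module.finrank ℂ W = m := by
      rw [finrank_span_eq_card hind, Fintype.card_fin]
    have hfrV : Module.finrank ℂ V = m := by
      have := h (m+1)
      rwa [min_eq_right (Nat.le_succ m)] at this
    have hVW : W = V :=
      Submodule.eq_of_le_of_finrank_le hWV (le_of_eq (hfrV.trans hfrW.symm))
    have hTm : (T ^ m) ξ ∈ W := by
      rw [hVW]
      exact Submodule.subset_span ⟨Fin.last m, rfl⟩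
    obtain ⟨f, hf⟩ := (Submodule.mem_span_range_iff_exists_fun ℂ).mp hTm
    refine ⟨X ^ m - ∑ i : Fin m, C (f i) * X ^ (i : ℕ), ?_, ?_⟩
    · have hdegS : (∑ i : Fin m, C (f i) * X ^ (i : ℕ)).degree < ((m : ℕ) : WithBot ℕ) := by
        apply lt_of_le_of_lt (degree_sum_le _ _)
        apply Finset.sup_lt_iff (by exact WithBot.bot_lt_coe m) |>.mpr
        intro i _
        exact lt_of_le_of_lt (degree_C_mul_X_pow_le _ _) (by exact_mod_cast i.2)
      rw [degree_sub_eq_left_of_degree_lt (by rwa [degree_X_pow]), degree_X_pow]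
    · have : (Polynomial.aeval T (X ^ m - ∑ i : Fin m, C (f i) * X ^ (i : ℕ))) ξ
          = (T ^ m) ξ - ∑ i : Fin m, f i • (T ^ (i : ℕ)) ξ := by
        simp [map_sub, map_sum, Polynomial.aeval_X_pow, Polynomial.aeval_C,
          ContinuousLinearMap.sub_apply, ContinuousLinearMap.sum_apply,
          Algebra.algebraMap_eq_smul_one, ContinuousLinearMap.mul_apply,
          ContinuousLinearMap.smul_apply]
      rw [this, hf, sub_self]
  · rintro ⟨hind, P, hPdeg, hPz⟩
    have hP0 : P ≠ 0 := fun h => by simp [h] at hPdeg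
    rcases Nat.eq_zero_or_pos m with hm0 | hmpos
    · exfalso
      subst hm0
      have hPC : P = C (P.coeff 0) := eq_C_of_degree_le_zero (le_of_eq hPdeg)
      have hc0 : P.coeff 0 ≠ 0 := fun h => hP0 (by rw [hPC, h, map_zero])
      rw [hPC] at hPz
      simp only [aeval_C, Algebra.algebraMap_eq_smul_one,
        ContinuousLinearMap.smul_apply, ContinuousLinearMap.one_apply] at hPz
      exact hξ (by simpa [hc0] using smul_eq_zero.mp hPz)
    · set W : Submodule ℂ H := Submodule.span ℂ (Set.range fun i : Fin m => (T ^ (i : ℕ)) ξ)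
      have hgen : ∀ i : ℕ, i < m → (T ^ i) ξ ∈ W :=
        fun i hi => Submodule.subset_span ⟨⟨i, hi⟩, rfl⟩
      have hnd : P.natDegree = m := natDegree_eq_of_degree_eq_some hPdeg
      have hcm : P.coeff m ≠ 0 := by
        have := coeff_ne_zero_of_eq_degree hPdeg
        exact this
      have hTm : (T ^ m) ξ ∈ W := by
        have hsum : ∑ i ∈ Finset.range (m + 1), P.coeff i • (T ^ i) ξ = 0 := by
          have := Polynomial.aeval_eq_sum_range (x := T) (p := P)
          rw [hnd] at this
          calc ∑ i ∈ Finset.range (m + 1), P.coeff i • (T ^ i) ξ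
              = (∑ i ∈ Finset.range (m + 1), P.coeff i • T ^ i) ξ := by
                rw [ContinuousLinearMap.sum_apply]
                exact Finset.sum_congr rfl fun i _ => rfl
            _ = (Polynomial.aeval T P) ξ := by rw [← this]
            _ = 0 := hPz
        rw [Finset.sum_range_succ] at hsum
        have hS : ∑ i ∈ Finset.range m, P.coeff i • (T ^ i) ξ ∈ W :=
          Submodule.sum_mem _ fun i hi =>
            Submodule.smul_mem _ _ (hgen i (Finset.mem_range.mp hi))
        have h1 : P.coeff m • (T ^ m) ξ ∈ W := by
          have : P.coeff m • (T ^ m) ξ = -(∑ i ∈ Finset.range m, P.coeff i • (T ^ i) ξ) := by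
            linear_combination (norm := module) hsum
          rw [this]
          exact W.neg_mem hS
        have h2 := W.smul_mem (P.coeff m)⁻¹ h1
        rwa [smul_smul, inv_mul_cancel₀ hcm, one_smul] at h2
      have hWinv : ∀ w ∈ W, T w ∈ W := by
        intro w hw
        induction hw using Submodule.span_induction with
        | mem u hu =>
          obtain ⟨i, rfl⟩ := hu
          have : T ((T ^ (i : ℕ)) ξ) = (T ^ ((i : ℕ) + 1)) ξ := by
            rw [pow_succ']; rfl
          rw [this]
          rcases lt_or_eq_of_le (Nat.succ_le_of_lt i.2) with h | h
          · exact hgen _ h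
          · rw [Nat.succ_eq_add_one] at h
            rw [h]; exact hTm
        | zero => rw [map_zero]; exact W.zero_mem
        | add u v _ _ hu hv => rw [map_add]; exact W.add_mem hu hv
        | smul a u _ hu => rw [map_smul]; exact W.smul_mem a hu
      have hpow : ∀ n : ℕ, (T ^ n) ξ ∈ W := by
        intro n
        induction n with
        | zero => exact hgen 0 hmpos
        | succ n ih =>
          have : (T ^ (n + 1)) ξ = T ((T ^ n) ξ) := by rw [pow_succ']; rfl
          rw [this]
          exact hWinv _ ih
      intro n
      rcases le_or_gt n m with hnm | hmn
      · rw [min_eq_left hnm]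
        have hcomp : (fun i : Fin n => (T ^ (i : ℕ)) ξ)
            = (fun i : Fin m => (T ^ (i : ℕ)) ξ) ∘ Fin.castLE hnm := rfl
        have hind' : LinearIndependent ℂ (fun i : Fin n => (T ^ (i : ℕ)) ξ) := by
          rw [hcomp]
          exact hind.comp _ (Fin.castLE_injective hnm)
        rw [finrank_span_eq_card hind', Fintype.card_fin]
      · rw [min_eq_right hmn.le]
        have hWn : Submodule.span ℂ (Set.range fun k : Fin n => (T ^ (k : ℕ)) ξ) = W := by
          apply le_antisymm
          · apply Submodule.span_le.mpr
            rintro _ ⟨k, rfl⟩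
            exact hpow k
          · apply Submodule.span_le.mpr
            rintro _ ⟨i, rfl⟩
            exact Submodule.subset_span ⟨⟨i, lt_trans i.2 hmn⟩, rfl⟩
        rw [hWn, finrank_span_eq_card hind, Fintype.card_fin]

end Aux3

/-- For a single contraction `T` on a finite-dimensional Hilbert space with
`D_1 = ℂξ` and `m ≤ dim H`: the defect dimensions satisfy `Δ_T^n = min(n, m)` for all `n`
iff `{ξ, Tξ, …, T^{m-1}ξ}` is linearly independent and there is a polynomial `P` of
degree `m` with `P(T)ξ = 0`. -/
theorem stmt15 {H : Type*} [NormedAddCommGroup H] [InnerProductSpace ℂ H]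
    [FiniteDimensional ℂ H]
    (T : H →L[ℂ] H) (hT : ‖T‖ ≤ 1)
    (ξ : H) (hξ : ξ ≠ 0)
    (hD : (LinearMap.range ((1 - T * adjoint T : H →L[ℂ] H) : H →ₗ[ℂ] H)).topologicalClosure =
      Submodule.span ℂ {ξ})
    (m : ℕ) (hm : m ≤ Module.finrank ℂ H) :
    (∀ n : ℕ,
      Module.finrank ℂ
        ((LinearMap.range ((1 - T ^ n * adjoint (T ^ n) : H →L[ℂ] H) : H →ₗ[ℂ] H)).topologicalClosure) =
        min n m)
      ↔
    (LinearIndependent ℂ (fun i : Fin m => (T ^ (i : ℕ)) ξ) ∧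
      ∃ P : Polynomial ℂ, P.degree = (m : ℕ) ∧ (Polynomial.aeval T P) ξ = 0) := by
  rw [closure_eq] at hD
  obtain ⟨c, hc0, hc⟩ := rank_one_struct T ξ hξ hD
  have hr : ∀ n : ℕ,
      (LinearMap.range ((1 - T ^ n * adjoint (T ^ n) : H →L[ℂ] H) : H →ₗ[ℂ] H)).topologicalClosure
        = Submodule.span ℂ (Set.range fun k : Fin n => (T ^ (k : ℕ)) ξ) :=
    fun n => (closure_eq _).trans (range_eq_span T ξ c hc0 hc n)
  refine Iff.trans ?_ (span_iterates_iff T ξ hξ m)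
  exact forall_congr' fun n => by rw [hr n]
end

section
/- Let T be a pure contraction on a Hilbert space H with Δ_T = 1. Then Δ_T^n = n for all 0 ≤ n ≤ dim H; that is, the defect dimensions achieve the maximal possible value (T is maximal). -/
open ContinuousLinearMap

private lemma aux_adj_pow {H : Type*} [NormedAddCommGroup H] [InnerProductSpace ℂ H]
    [CompleteSpace H] (T : H →L[ℂ] H) (k : ℕ) : adjoint (T ^ k) = (adjoint T) ^ k := by
  rw [← star_eq_adjoint, ← star_eq_adjoint, star_pow]

private lemma aux_sa {H : Type*} [NormedAddCommGroup H] [InnerProductSpace ℂ H]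
    [CompleteSpace H] (A : H →L[ℂ] H) (x y : H) :
    (inner ℂ ((1 - A * adjoint A) x) y : ℂ) = inner ℂ x ((1 - A * adjoint A) y) := by
  simp only [ContinuousLinearMap.sub_apply, ContinuousLinearMap.mul_apply, ContinuousLinearMap.one_apply, inner_sub_left,
    inner_sub_right]
  rw [← adjoint_inner_right A (adjoint A x) y, adjoint_inner_left]

private lemma aux_sum {H : Type*} [NormedAddCommGroup H] [InnerProductSpace ℂ H]
    [CompleteSpace H] (T : H →L[ℂ] H) (m : ℕ) :
    (1 : H →L[ℂ] H) - T ^ m * (adjoint T) ^ m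
      = ∑ k ∈ Finset.range m, T ^ k * (1 - T * adjoint T) * (adjoint T) ^ k := by
  induction m with
  | zero => simp
  | succ m ih =>
    rw [Finset.sum_range_succ, ← ih, pow_succ T m, pow_succ' (adjoint T) m]
    noncomm_ring

set_option maxHeartbeats 1000000 in
/-- Let `T` be a single pure contraction (`T*ⁿ → 0` strongly) with `Δ_T = 1`. Then
`Δ_T^n = n` for all `0 ≤ n ≤ dim H`: the defect dimensions are maximal. -/
theorem stmt17 {H : Type*} [NormedAddCommGroup H] [InnerProductSpace ℂ H] [CompleteSpace H]
    (T : H →L[ℂ] H) (hT : ‖T‖ ≤ 1)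
    (hpure : ∀ x : H,
      Filter.Tendsto (fun n : ℕ => ((adjoint T) ^ n) x) Filter.atTop (nhds 0))
    (hdef : Module.rank ℂ
      ((LinearMap.range ((1 - T * adjoint T : H →L[ℂ] H) : H →ₗ[ℂ] H)).topologicalClosure) = 1) :
    ∀ n : ℕ, (n : Cardinal) ≤ Module.rank ℂ H →
      Module.rank ℂ
        ((LinearMap.range ((1 - T ^ n * adjoint (T ^ n) : H →L[ℂ] H) : H →ₗ[ℂ] H)).topologicalClosure) =
        n := by
  classical
  intro n hn
  set P : H →L[ℂ] H := 1 - T * adjoint T with hPdef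
  -- rank one structure of the defect operator
  obtain ⟨v₀, hv₀ne, hv₀span⟩ := rank_eq_one_iff.mp hdef
  set v : H := (v₀ : H) with hvdef
  have hvne : v ≠ 0 := fun h => hv₀ne (by simpa [hvdef] using h)
  have hvv : (inner ℂ v v : ℂ) ≠ 0 := inner_self_ne_zero.mpr hvne
  have hPx : ∀ x : H, ∃ c : ℂ, P x = c • v := by
    intro x
    have hmem : P x ∈ (LinearMap.range (P : H →ₗ[ℂ] H)).topologicalClosure :=
      Submodule.le_topologicalClosure _ (LinearMap.mem_range_self (P : H →ₗ[ℂ] H) x)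
    obtain ⟨c, hc⟩ := hv₀span ⟨P x, hmem⟩
    exact ⟨c, by simpa [hvdef] using (congrArg Subtype.val hc).symm⟩
  obtain ⟨c₀, hc₀⟩ := hPx v
  set d : ℂ := (starRingEnd ℂ) c₀ / (inner ℂ v v : ℂ) with hddef
  have hform : ∀ x : H, P x = (d * (inner ℂ v x : ℂ)) • v := by
    intro x
    obtain ⟨c, hc⟩ := hPx x
    have h1 : (inner ℂ v (P x) : ℂ) = c * inner ℂ v v := by rw [hc, inner_smul_right]
    have h2 : (inner ℂ v (P x) : ℂ) = (starRingEnd ℂ) c₀ * inner ℂ v x := by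
      rw [← aux_sa T v x, hc₀, inner_smul_left]
    have key : c * inner ℂ v v = (starRingEnd ℂ) c₀ * inner ℂ v x := h1.symm.trans h2
    have hc' : c = d * inner ℂ v x := by
      rw [hddef, div_mul_eq_mul_div, eq_div_iff hvv]
      linear_combination key
    rw [hc, hc']
  have hd : d ≠ 0 := by
    intro h0
    have hP0 : LinearMap.range (P : H →ₗ[ℂ] H) = ⊥ := by
      rw [Submodule.eq_bot_iff]
      rintro y ⟨x, rfl⟩
      simp [hform x, h0]
    rw [hP0] at hdef
    have hbc : ((⊥ : Submodule ℂ H)).topologicalClosure = ⊥ := by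
      refine IsClosed.submodule_topologicalClosure_eq ?_
      rw [Submodule.bot_coe]
      exact isClosed_singleton
    rw [hbc] at hdef
    simp at hdef
  -- the vectors T^k v
  set g : ℕ → H := fun k => (T ^ k) v with hgdef
  have hgsucc : ∀ j : ℕ, g (j + 1) = T (g j) := by
    intro j
    rw [hgdef]
    simp only
    rw [pow_succ' T j, ContinuousLinearMap.mul_apply]
  have hinner : ∀ (k : ℕ) (x : H), (inner ℂ v (((adjoint T) ^ k) x) : ℂ) = inner ℂ (g k) x := by
    intro k x
    rw [← aux_adj_pow, adjoint_inner_right]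
  -- density argument from purity
  have hzero : ∀ x : H, (∀ k : ℕ, (inner ℂ (g k) x : ℂ) = 0) → x = 0 := by
    intro x hx
    have hstep : ∀ k : ℕ, ((adjoint T) ^ k) x = T (((adjoint T) ^ (k + 1)) x) := by
      intro k
      have h1 : P (((adjoint T) ^ k) x) = 0 := by
        rw [hform, hinner k x, hx k, mul_zero, zero_smul]
      have h2 : ((adjoint T) ^ k) x - T (adjoint T (((adjoint T) ^ k) x)) = 0 := by
        simpa [hPdef, ContinuousLinearMap.sub_apply, ContinuousLinearMap.mul_apply, ContinuousLinearMap.one_apply] using h1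
      rw [pow_succ' (adjoint T) k, ContinuousLinearMap.mul_apply]
      exact sub_eq_zero.mp h2
    have hinv : ∀ k : ℕ, (T ^ k) (((adjoint T) ^ k) x) = x := by
      intro k
      induction k with
      | zero => simp
      | succ k ih =>
        rw [pow_succ T k, ContinuousLinearMap.mul_apply, ← hstep k]
        exact ih
    have hle : ∀ k : ℕ, ‖x‖ ≤ ‖((adjoint T) ^ k) x‖ := by
      intro k
      conv_lhs => rw [← hinv k]
      calc ‖(T ^ k) (((adjoint T) ^ k) x)‖
          ≤ ‖T ^ k‖ * ‖((adjoint T) ^ k) x‖ := le_opNorm _ _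
        _ ≤ 1 * ‖((adjoint T) ^ k) x‖ := by
            refine mul_le_mul_of_nonneg_right ?_ (norm_nonneg _)
            rcases Nat.eq_zero_or_pos k with hk | hk
            · subst hk; rw [pow_zero]; exact ContinuousLinearMap.norm_id_le
            · exact (norm_pow_le' T hk).trans (pow_le_one₀ (norm_nonneg T) hT)
        _ = ‖((adjoint T) ^ k) x‖ := one_mul _
    have hlim : Filter.Tendsto (fun k : ℕ => ‖((adjoint T) ^ k) x‖)
        Filter.atTop (nhds 0) := by
      simpa using (hpure x).norm
    exact norm_le_zero_iff.mp (ge_of_tendsto hlim (Filter.Eventually.of_forall hle))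
  -- linear independence of (T^k v)_{k < m} whenever m ≤ dim H
  have hLI : ∀ m : ℕ, (m : Cardinal) ≤ Module.rank ℂ H →
      LinearIndependent ℂ (fun k : Fin m => g k) := by
    intro m
    induction m with
    | zero => intro _; exact linearIndependent_empty_type
    | succ m ih =>
      intro hm1
      have hli := ih ((Nat.cast_le.mpr (Nat.le_succ m)).trans hm1)
      have hsnoc : (fun k : Fin (m + 1) => g k)
          = Fin.snoc (fun k : Fin m => g k) (g m) := by
        funext k
        induction k using Fin.lastCases with
        | last => simp
        | cast k => simp
      rw [hsnoc, linearIndependent_fin_snoc]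
      refine ⟨hli, fun hmem => ?_⟩
      set W := Submodule.span ℂ (Set.range fun k : Fin m => g k) with hWdef
      have hTW : ∀ w ∈ W, T w ∈ W := by
        intro w hw
        induction hw using Submodule.span_induction with
        | mem u hu =>
          obtain ⟨k, rfl⟩ := hu
          rw [← hgsucc k]
          by_cases hk : (k : ℕ) + 1 = m
          · rw [hk]; exact hmem
          · exact Submodule.subset_span
              ⟨⟨(k : ℕ) + 1, lt_of_le_of_ne k.isLt hk⟩, rfl⟩
        | zero => simp
        | add a b _ _ ha hb => rw [map_add]; exact W.add_mem ha hb
        | smul c a _ ha => rw [map_smul]; exact W.smul_mem c ha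
      have hgW : ∀ j : ℕ, g j ∈ W := by
        intro j
        induction j with
        | zero =>
          rcases Nat.eq_zero_or_pos m with hm0 | hm0
          · subst hm0; exact hmem
          · exact Submodule.subset_span ⟨⟨0, hm0⟩, rfl⟩
        | succ j ihj =>
          rw [hgsucc j]
          exact hTW _ ihj
      haveI : FiniteDimensional ℂ ↥W :=
        FiniteDimensional.span_of_finite ℂ (Set.finite_range _)
      have hWbot : Wᗮ = ⊥ := by
        rw [Submodule.eq_bot_iff]
        intro x hxW
        exact hzero x fun k => (Submodule.mem_orthogonal W x).mp hxW (g k) (hgW k)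
      have hWtop : W = ⊤ := Submodule.orthogonal_eq_bot_iff.mp hWbot
      have hr1 : Module.rank ℂ H ≤ (m : Cardinal) := by
        have h2 : Module.rank ℂ ↥W ≤ (m : Cardinal) := by
          have hfr : Module.finrank ℂ ↥W ≤ m := by
            rw [hWdef]
            simpa [Set.finrank] using finrank_range_le_card (R := ℂ) (fun k : Fin m => g k)
          rw [← Module.finrank_eq_rank ℂ ↥W]
          exact_mod_cast hfr
        calc Module.rank ℂ H = Module.rank ℂ ↥(⊤ : Submodule ℂ H) := (rank_top ℂ H).symm
          _ = Module.rank ℂ ↥W := by rw [hWtop]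
          _ ≤ (m : Cardinal) := h2
      have habs : ((m + 1 : ℕ) : Cardinal) ≤ ((m : ℕ) : Cardinal) := hm1.trans hr1
      exact absurd (Nat.cast_le.mp habs) (by omega)
  have hli := hLI n hn
  set Wn := Submodule.span ℂ (Set.range fun k : Fin n => g k) with hWndef
  -- the defect operator as a finite-rank sum
  have hDapply : ∀ x : H, (1 - T ^ n * adjoint (T ^ n) : H →L[ℂ] H) x
      = ∑ k ∈ Finset.range n, (d * (inner ℂ (g k) x : ℂ)) • g k := by
    intro x
    rw [aux_adj_pow, aux_sum, ContinuousLinearMap.sum_apply]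
    refine Finset.sum_congr rfl fun k _ => ?_
    rw [ContinuousLinearMap.mul_apply, ContinuousLinearMap.mul_apply, ← hPdef, hform, hinner k x, map_smul]
  have hsaD : ∀ x y : H, (inner ℂ ((1 - T ^ n * adjoint (T ^ n) : H →L[ℂ] H) x) y : ℂ)
      = inner ℂ x ((1 - T ^ n * adjoint (T ^ n) : H →L[ℂ] H) y) := by
    intro x y
    exact aux_sa (T ^ n) x y
  have hker : LinearMap.ker ((1 - T ^ n * adjoint (T ^ n) : H →L[ℂ] H) : H →ₗ[ℂ] H) = Wnᗮ := by
    apply le_antisymm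
    · intro x hx
      have hx0 : (1 - T ^ n * adjoint (T ^ n) : H →L[ℂ] H) x = 0 := hx
      have hsum : (0 : ℂ)
          = d * ∑ k ∈ Finset.range n, ((Complex.normSq (inner ℂ (g k) x) : ℝ) : ℂ) := by
        calc (0 : ℂ) = inner ℂ x ((1 - T ^ n * adjoint (T ^ n) : H →L[ℂ] H) x) := by
              rw [hx0, inner_zero_right]
          _ = ∑ k ∈ Finset.range n, (d * (inner ℂ (g k) x : ℂ)) * inner ℂ x (g k) := by
              rw [hDapply, inner_sum]
              simp_rw [inner_smul_right]
          _ = d * ∑ k ∈ Finset.range n, ((Complex.normSq (inner ℂ (g k) x) : ℝ) : ℂ) := by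
              rw [Finset.mul_sum]
              refine Finset.sum_congr rfl fun k _ => ?_
              rw [mul_assoc, ← inner_conj_symm x (g k), Complex.mul_conj]
      have hsum0 : ∑ k ∈ Finset.range n, Complex.normSq (inner ℂ (g k) x) = 0 := by
        have h' : (((∑ k ∈ Finset.range n, Complex.normSq (inner ℂ (g k) x)) : ℝ) : ℂ) = 0 := by
          rcases mul_eq_zero.mp hsum.symm with h | h
          · exact absurd h hd
          · rw [← h]; push_cast; ring
        exact_mod_cast h'
      have heach : ∀ k, k < n → (inner ℂ (g k) x : ℂ) = 0 := by
        intro k hk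
        have h0 := (Finset.sum_eq_zero_iff_of_nonneg
          (fun i _ => Complex.normSq_nonneg _)).mp hsum0 k (Finset.mem_range.mpr hk)
        exact Complex.normSq_eq_zero.mp h0
      rw [Submodule.mem_orthogonal]
      intro u hu
      rw [hWndef] at hu
      induction hu using Submodule.span_induction with
      | mem u hu =>
        obtain ⟨k, rfl⟩ := hu
        exact heach k k.isLt
      | zero => exact inner_zero_left x
      | add a b _ _ ha hb => rw [inner_add_left, ha, hb, add_zero]
      | smul c a _ ha => rw [inner_smul_left, ha, mul_zero]
    · intro x hx
      have hx0 : (1 - T ^ n * adjoint (T ^ n) : H →L[ℂ] H) x = 0 := by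
        rw [hDapply]
        refine Finset.sum_eq_zero fun k hk => ?_
        have hz : (inner ℂ (g k) x : ℂ) = 0 := by
          refine (Submodule.mem_orthogonal Wn x).mp hx (g k) ?_
          exact Submodule.subset_span ⟨⟨k, Finset.mem_range.mp hk⟩, rfl⟩
        rw [hz, mul_zero, zero_smul]
      exact hx0
  haveI : FiniteDimensional ℂ ↥Wn :=
    FiniteDimensional.span_of_finite ℂ (Set.finite_range _)
  have horange : (LinearMap.range ((1 - T ^ n * adjoint (T ^ n) : H →L[ℂ] H) : H →ₗ[ℂ] H))ᗮ
      = LinearMap.ker ((1 - T ^ n * adjoint (T ^ n) : H →L[ℂ] H) : H →ₗ[ℂ] H) := by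
    ext x
    rw [Submodule.mem_orthogonal, LinearMap.mem_ker]
    constructor
    · intro h
      refine ext_inner_left ℂ fun y => ?_
      rw [inner_zero_right, ContinuousLinearMap.coe_coe, ← hsaD y x]
      exact h _ (LinearMap.mem_range_self _ y)
    · intro h u hu
      obtain ⟨y, rfl⟩ := hu
      rw [ContinuousLinearMap.coe_coe] at h ⊢
      rw [hsaD y x, h, inner_zero_right]
  have hclos : (LinearMap.range
      ((1 - T ^ n * adjoint (T ^ n) : H →L[ℂ] H) : H →ₗ[ℂ] H)).topologicalClosure = Wn := by
    rw [← Submodule.orthogonal_orthogonal_eq_closure, horange, hker,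
      Submodule.orthogonal_orthogonal_eq_closure]
    exact (Submodule.closed_of_finiteDimensional Wn).submodule_topologicalClosure_eq
  rw [hclos, hWndef, rank_span hli]
  simpa using Cardinal.mk_range_eq_of_injective hli.injective
end
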